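/- arXiv:1311.3460 — 5 statements merged into one kernel-verified Lean document; each statement's English description precedes it below -/
import Mathlib

section
/- Let u, u', v, v' be words over Fin n all of whose letters are ≥ 2. Suppose u ++ [1] ++ u' ++ [0] ++ v ++ [1] ++ v' is canonical. If c is canonical with c ~ v ++ v', and d is canonical with d ~ u' ++ v ++ v', then both u ++ [1] ++ u' ++ [0] ++ c and u ++ [1] ++ d are canonical. -/
variable {n : ℕ}

/-- Generating relation of the Kiselman congruence on words over `Fin n`. -/
inductive KisStep : List (Fin n) → List (Fin n) → Prop
  | idem : ∀ (u v : List (Fin n)) (i : Fin n),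
      KisStep (u ++ [i, i] ++ v) (u ++ [i] ++ v)
  | left : ∀ (u v : List (Fin n)) (i j : Fin n), i < j →
      KisStep (u ++ [i, j, i] ++ v) (u ++ [i, j] ++ v)
  | right : ∀ (u v : List (Fin n)) (i j : Fin n), i < j →
      KisStep (u ++ [j, i, j] ++ v) (u ++ [i, j] ++ v)

/-- The Kiselman congruence: smallest equivalence relation containing `KisStep`. -/
def KisEquiv (x y : List (Fin n)) : Prop := Relation.EqvGen KisStep x y

/-- An infix `[i] ++ u ++ [i]` is special if `u` contains a letter `> i` and a letter `< i`. -/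
def Special (i : Fin n) (u : List (Fin n)) : Prop :=
  (∃ j ∈ u, i < j) ∧ (∃ j ∈ u, j < i)

/-- A word is canonical if all its infixes of the form `[i] ++ u ++ [i]` are special. -/
def Canonical (w : List (Fin n)) : Prop :=
  ∀ (i : Fin n) (u : List (Fin n)), ([i] ++ u ++ [i]) <:+: w → Special i u

/-- Delete all letters strictly smaller than `k`. -/
def filterGE (k : Fin n) (w : List (Fin n)) : List (Fin n) :=
  w.filter (fun a => decide (k ≤ a))

/-- `trunc i w` is the longest suffix of `w` with head `i`, or `[]` if `i ∉ w`. -/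
def trunc (i : Fin n) : List (Fin n) → List (Fin n)
  | [] => []
  | a :: t => if a = i then a :: t else trunc i t

/-- Longest suffix of `w` whose head is `< k` (as a natural number), or `[]`. -/
def truncLtN (k : ℕ) : List (Fin n) → List (Fin n)
  | [] => []
  | a :: t => if (a : ℕ) < k then a :: t else truncLtN k t

/-- `join u v = u⁺ ++ v`, where `u⁻` is the longest suffix of `u` that is a sublist of `v`. -/
def join : List (Fin n) → List (Fin n) → List (Fin n)
  | [], v => v
  | a :: t, v => if (a :: t).Sublist v then v else a :: join t v

/-- The local update function at vertex `i` of the update system `S_n^⋆`. -/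
def Fstep (i : Fin n) (s : Fin n → List (Fin n)) : Fin n → List (Fin n) :=
  Function.update s i
    (i :: List.foldr join []
      ((((List.finRange n).filter (fun j => decide (i < j))).reverse).map s))

/-- The evolution induced by a word (rightmost letter acts first). -/
def Fword (w : List (Fin n)) (s : Fin n → List (Fin n)) : Fin n → List (Fin n) :=
  w.foldr Fstep s

/-- The initial system state `⋆`. -/
def starState : Fin n → List (Fin n) := fun _ => []

namespace KisAux

/-- sum of components strictly above `a` -/
def bigSum (a : Fin n) (s : Fin n → ℕ) : ℕ :=
  ∑ k ∈ Finset.univ.filter (fun k => a < k), s k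

def Nstep (a : Fin n) (s : Fin n → ℕ) : Fin n → ℕ :=
  Function.update s a (1 + bigSum a s)

def Nword (w : List (Fin n)) (s : Fin n → ℕ) : Fin n → ℕ := w.foldr Nstep s

@[simp] lemma Nword_nil (s : Fin n → ℕ) : Nword [] s = s := rfl
@[simp] lemma Nword_cons (a : Fin n) (w : List (Fin n)) (s : Fin n → ℕ) :
    Nword (a :: w) s = Nstep a (Nword w s) := rfl
@[simp] lemma Nword_append (x y : List (Fin n)) (s : Fin n → ℕ) :
    Nword (x ++ y) s = Nword x (Nword y s) := List.foldr_append

lemma bigSum_congr {c : Fin n} {s t : Fin n → ℕ} (h : ∀ k, c < k → s k = t k) :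
    bigSum c s = bigSum c t := by
  unfold bigSum
  refine Finset.sum_congr rfl (fun k hk => ?_)
  exact h k (by simpa using hk)

lemma bigSum_update {c a : Fin n} {s : Fin n → ℕ} {v : ℕ} (h : ¬ c < a) :
    bigSum c (Function.update s a v) = bigSum c s := by
  refine bigSum_congr (fun k hk => ?_)
  exact Function.update_of_ne (by rintro rfl; exact h hk) _ _

lemma bigSum_mono {c : Fin n} {s t : Fin n → ℕ} (h : ∀ k, s k ≤ t k) :
    bigSum c s ≤ bigSum c t :=
  Finset.sum_le_sum (fun k _ => h k)

lemma nstep_id1 (a : Fin n) (s : Fin n → ℕ) : Nstep a (Nstep a s) = Nstep a s := by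
  funext k
  by_cases hk : k = a
  · subst hk
    simp only [Nstep, Function.update_self]
    rw [bigSum_update (lt_irrefl _)]
  · simp only [Nstep, Function.update_of_ne hk]

lemma nstep_id2 {a b : Fin n} (hab : a < b) (s : Fin n → ℕ) :
    Nstep a (Nstep b (Nstep a s)) = Nstep a (Nstep b s) := by
  have hba : ¬ b < a := not_lt.mpr hab.le
  have hne : a ≠ b := ne_of_lt hab
  funext k
  by_cases hk : k = a
  · subst hk
    simp only [Nstep, Function.update_self]
    congr 1
    refine bigSum_congr (fun k' hk' => ?_)
    have hka : k' ≠ k := ne_of_gt hk'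
    by_cases hkb : k' = b
    · subst hkb
      rw [Function.update_self, Function.update_self, bigSum_update hba]
    · rw [Function.update_of_ne hkb, Function.update_of_ne hka,
        Function.update_of_ne hkb]
  · by_cases hkb : k = b
    · subst hkb
      simp only [Nstep, Function.update_of_ne hk, Function.update_self]
      rw [bigSum_update hba]
    · simp only [Nstep, Function.update_of_ne hk, Function.update_of_ne hkb]

lemma nstep_id3 {a b : Fin n} (hab : a < b) (s : Fin n → ℕ) :
    Nstep b (Nstep a (Nstep b s)) = Nstep a (Nstep b s) := by
  have hne : a ≠ b := ne_of_lt hab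
  funext k
  by_cases hkb : k = b
  · subst hkb
    simp only [Nstep, Function.update_self, Function.update_of_ne (Ne.symm hne)]
    congr 1
    refine bigSum_congr (fun k' hk' => ?_)
    have hkb' : k' ≠ k := ne_of_gt hk'
    have hka : k' ≠ a := ne_of_gt (lt_trans hab hk')
    rw [Function.update_of_ne hka, Function.update_of_ne hkb']
  · by_cases hka : k = a
    · subst hka
      simp only [Nstep, Function.update_of_ne hkb, Function.update_self]
    · simp only [Nstep, Function.update_of_ne hkb, Function.update_of_ne hka]

lemma kisstep_nword {x y : List (Fin n)} (h : KisStep x y) (s : Fin n → ℕ) :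
    Nword x s = Nword y s := by
  cases h with
  | idem u v i =>
      simp only [Nword_append]
      exact congrArg (Nword u) (by simp [nstep_id1])
  | left u v i j hij =>
      simp only [Nword_append]
      exact congrArg (Nword u) (by simp [nstep_id2 hij])
  | right u v i j hij =>
      simp only [Nword_append]
      exact congrArg (Nword u) (by simp [nstep_id3 hij])

lemma kisequiv_nword {x y : List (Fin n)} (h : KisEquiv x y) (s : Fin n → ℕ) :
    Nword x s = Nword y s := by
  induction h with
  | rel a b hab => exact kisstep_nword hab s
  | refl a => rfl
  | symm a b _ ih => exact ih.symm
  | trans a b c _ _ ih₁ ih₂ => exact ih₁.trans ih₂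

end KisAux

namespace KisAux

def z0 : Fin n → ℕ := fun _ => 0

/-- invariant of reachable states -/
def Gd (s : Fin n → ℕ) : Prop := ∀ a, s a ≤ 1 + bigSum a s

lemma gd_z0 : Gd (z0 : Fin n → ℕ) := fun _ => Nat.zero_le _

lemma nstep_le {s : Fin n → ℕ} (hs : Gd s) (a : Fin n) :
    ∀ k, s k ≤ Nstep a s k := by
  intro k
  by_cases hk : k = a
  · subst hk; rw [Nstep, Function.update_self]; exact hs k
  · rw [Nstep, Function.update_of_ne hk]

lemma gd_nstep {s : Fin n → ℕ} (hs : Gd s) (a : Fin n) : Gd (Nstep a s) := by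
  intro k
  by_cases hk : k = a
  · subst hk
    rw [Nstep, Function.update_self, bigSum_update (lt_irrefl _)]
  · rw [Nstep, Function.update_of_ne hk]
    exact le_trans (hs k) (Nat.add_le_add_left (bigSum_mono (nstep_le hs a)) 1)

lemma nword_mono (w : List (Fin n)) {s : Fin n → ℕ} (hs : Gd s) :
    Gd (Nword w s) ∧ ∀ k, s k ≤ Nword w s k := by
  induction w with
  | nil => exact ⟨hs, fun k => le_refl _⟩
  | cons a t ih =>
      refine ⟨gd_nstep ih.1 a, fun k => le_trans (ih.2 k) (nstep_le ih.1 a k)⟩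

lemma gd_reach (y : List (Fin n)) : Gd (Nword y z0) := (nword_mono y gd_z0).1

lemma nword_notmem {a : Fin n} {w : List (Fin n)} (h : a ∉ w) (s : Fin n → ℕ) :
    Nword w s a = s a := by
  induction w with
  | nil => rfl
  | cons b t ih =>
      have hab : a ≠ b := fun he => h (he ▸ (List.mem_cons_self : b ∈ b :: t))
      have hat : a ∉ t := fun ht => h (List.mem_cons_of_mem b ht)
      rw [Nword_cons, Nstep, Function.update_of_ne hab, ih hat]

lemma mem_first {α : Type*} {a : α} : ∀ {l : List α}, a ∈ l →
    ∃ l₁ l₂, l = l₁ ++ [a] ++ l₂ ∧ a ∉ l₁ := by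
  intro l
  induction l with
  | nil => intro h; exact absurd h List.not_mem_nil
  | cons b t ih =>
      intro h
      by_cases hb : a = b
      · subst hb; exact ⟨[], t, rfl, List.not_mem_nil⟩
      · have ht : a ∈ t := by
          rcases List.mem_cons.mp h with h' | h'
          · exact absurd h' hb
          · exact h'
        obtain ⟨l₁, l₂, hl, ha⟩ := ih ht
        exact ⟨b :: l₁, l₂, by rw [hl]; rfl, by
          intro hm
          rcases List.mem_cons.mp hm with h' | h'
          · exact hb h'
          · exact ha h'⟩

lemma strict {BB : List (Fin n)}
    (UC : ∀ x b mm y, BB = x ++ [b] ++ mm ++ [b] ++ y → ∃ g ∈ mm, b < g) :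
    ∀ (N : ℕ) (x : List (Fin n)) (b : Fin n) (y : List (Fin n)),
      y.length ≤ N → BB = x ++ [b] ++ y →
      Nword y z0 b < 1 + bigSum b (Nword y z0) := by
  intro N
  induction N with
  | zero =>
      intro x b y hlen hBB
      have hy : y = [] := List.eq_nil_of_length_eq_zero (Nat.le_zero.mp hlen)
      subst hy
      simp [z0]
  | succ N ih =>
      intro x b y hlen hBB
      by_cases hby : b ∈ y
      · obtain ⟨y₁, y₂, hy, hbny₁⟩ := mem_first hby
        obtain ⟨g, hgm, hbg⟩ := UC x b y₁ y₂ (by rw [hBB, hy]; simp)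
        obtain ⟨p, q, hpq⟩ := List.append_of_mem hgm
        -- y₁ = p ++ g :: q
        have hylen : y.length = p.length + 1 + (q.length + 1 + y₂.length) := by
          rw [hy, hpq]; simp; omega
        have hlen' : (q ++ [b] ++ y₂).length ≤ N := by
          simp only [List.length_append, List.length_cons, List.length_nil] at *
          omega
        have hdec : BB = (x ++ [b] ++ p) ++ [g] ++ (q ++ [b] ++ y₂) := by
          rw [hBB, hy, hpq]; simp
        have IH := ih (x ++ [b] ++ p) g (q ++ [b] ++ y₂) hlen' hdec
        -- abbreviations
        set σ₂ := Nword y₂ z0 with hσ₂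
        set σm := Nstep b σ₂ with hσm
        set τ := Nword q σm with hτ
        have hτeq : τ = Nword (q ++ [b] ++ y₂) z0 := by
          rw [hτ, hσm, hσ₂]; simp
        set τ' := Nstep g τ with hτ'
        have hσy : Nword y z0 = Nword p τ' := by
          rw [hy, hpq, hτ', hτ, hσm, hσ₂]
          simp
        -- left side value
        have hgdσm : Gd σm := by
          have : σm = Nword ([b] ++ y₂) z0 := by rw [hσm, hσ₂]; simp
          rw [this]; exact gd_reach _
        have hgdτ : Gd τ := (nword_mono q hgdσm).1
        have hgdτ' : Gd τ' := gd_nstep hgdτ g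
        have hval : Nword y z0 b = 1 + bigSum b σ₂ := by
          rw [hy]
          have : Nword (y₁ ++ [b] ++ y₂) z0 = Nword y₁ σm := by
            rw [hσm, hσ₂]; simp
          rw [this, nword_notmem hbny₁, hσm, Nstep, Function.update_self]
        rw [hval]
        have key : bigSum b σ₂ < bigSum b (Nword y z0) := by
          have e1 : bigSum b σ₂ = bigSum b σm := by
            rw [hσm, Nstep, bigSum_update (lt_irrefl _)]
          have e2 : bigSum b σm ≤ bigSum b τ :=
            bigSum_mono (nword_mono q hgdσm).2
          have e3 : bigSum b τ < bigSum b τ' := by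
            unfold bigSum
            refine Finset.sum_lt_sum (fun k _ => nstep_le hgdτ g k) ⟨g, ?_, ?_⟩
            · simp [hbg]
            · rw [hτ', Nstep, Function.update_self]
              rw [hτeq] at *
              exact IH
          have e4 : bigSum b τ' ≤ bigSum b (Nword y z0) := by
            rw [hσy]
            exact bigSum_mono (nword_mono p hgdτ').2
          omega
        omega
      · rw [nword_notmem hby]
        simp [z0]

lemma mainLemma {BB B₀ B₁ : List (Fin n)} {i : Fin n}
    (UC : ∀ x b mm y, BB = x ++ [b] ++ mm ++ [b] ++ y → ∃ g ∈ mm, b < g)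
    (hBB : BB = B₀ ++ [i] ++ B₁) (hiB₀ : i ∉ B₀) (hbig : ∃ j ∈ B₀, i < j) :
    ¬ KisEquiv (i :: BB) BB := by
  intro he
  have heq := congrFun (kisequiv_nword he z0) i
  -- LHS
  have hL : Nword (i :: BB) z0 i = 1 + bigSum i (Nword BB z0) := by
    rw [Nword_cons, Nstep, Function.update_self]
  -- RHS structure
  set σ₁ := Nword B₁ z0 with hσ₁
  have hR : Nword BB z0 i = 1 + bigSum i σ₁ := by
    rw [hBB]
    have : Nword (B₀ ++ [i] ++ B₁) z0 = Nword B₀ (Nstep i σ₁) := by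
      rw [hσ₁]; simp
    rw [this, nword_notmem hiB₀, Nstep, Function.update_self]
  obtain ⟨j, hjB₀, hij⟩ := hbig
  obtain ⟨x₀, y₀, hx₀⟩ := List.append_of_mem hjB₀
  set ρ := Nword (y₀ ++ [i] ++ B₁) z0 with hρ
  have hstr : ρ j < 1 + bigSum j ρ := by
    refine strict UC (y₀ ++ [i] ++ B₁).length x₀ j (y₀ ++ [i] ++ B₁) (le_refl _) ?_
    rw [hBB, hx₀]; simp
  have hσeq : Nword BB z0 = Nword x₀ (Nstep j ρ) := by
    rw [hBB, hx₀, hρ]; simp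
  have hgdρ : Gd ρ := gd_reach _
  have hgdjρ : Gd (Nstep j ρ) := gd_nstep hgdρ j
  have c1 : bigSum i σ₁ ≤ bigSum i ρ := by
    have e0 : bigSum i σ₁ = bigSum i (Nstep i σ₁) := by
      rw [Nstep, bigSum_update (lt_irrefl _)]
    have : ρ = Nword y₀ (Nstep i σ₁) := by rw [hρ, hσ₁]; simp
    rw [e0, this]
    have hgd : Gd (Nstep i σ₁) := by
      have : Nstep i σ₁ = Nword ([i] ++ B₁) z0 := by rw [hσ₁]; simp
      rw [this]; exact gd_reach _
    exact bigSum_mono (nword_mono y₀ hgd).2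
  have c2 : bigSum i ρ < bigSum i (Nstep j ρ) := by
    unfold bigSum
    refine Finset.sum_lt_sum (fun k _ => nstep_le hgdρ j k) ⟨j, ?_, ?_⟩
    · simp [hij]
    · rw [Nstep, Function.update_self]; exact hstr
  have c3 : bigSum i (Nstep j ρ) ≤ bigSum i (Nword BB z0) := by
    rw [hσeq]
    exact bigSum_mono (nword_mono x₀ hgdjρ).2
  rw [hL, hR] at heq
  omega

end KisAux

namespace KisAux

lemma kisstep_mem {x y : List (Fin n)} (h : KisStep x y) (a : Fin n) :
    a ∈ x ↔ a ∈ y := by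
  cases h with
  | idem u v i => simp only [List.mem_append, List.mem_cons, List.mem_singleton,
      List.not_mem_nil]; tauto
  | left u v i j hij => simp only [List.mem_append, List.mem_cons, List.mem_singleton,
      List.not_mem_nil]; tauto
  | right u v i j hij => simp only [List.mem_append, List.mem_cons, List.mem_singleton,
      List.not_mem_nil]; tauto

lemma kisequiv_mem {x y : List (Fin n)} (h : KisEquiv x y) (a : Fin n) :
    a ∈ x ↔ a ∈ y := by
  induction h with
  | rel p q hpq => exact kisstep_mem hpq a
  | refl p => exact Iff.rfl
  | symm p q _ ih => exact ih.symm
  | trans p q r _ _ ih₁ ih₂ => exact ih₁.trans ih₂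

lemma kisstep_cons (a : Fin n) {x y : List (Fin n)} (h : KisStep x y) :
    KisStep (a :: x) (a :: y) := by
  cases h with
  | idem u v i => exact KisStep.idem (a :: u) v i
  | left u v i j hij => exact KisStep.left (a :: u) v i j hij
  | right u v i j hij => exact KisStep.right (a :: u) v i j hij

lemma kisequiv_cons (a : Fin n) {x y : List (Fin n)} (h : KisEquiv x y) :
    KisEquiv (a :: x) (a :: y) := by
  induction h with
  | rel p q hpq => exact Relation.EqvGen.rel _ _ (kisstep_cons a hpq)
  | refl p => exact Relation.EqvGen.refl _
  | symm p q _ ih => exact Relation.EqvGen.symm _ _ ih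
  | trans p q r _ _ ih₁ ih₂ => exact Relation.EqvGen.trans _ _ _ ih₁ ih₂

lemma kisstep_filter (p : Fin n → Bool) {x y : List (Fin n)} (h : KisStep x y) :
    KisEquiv (x.filter p) (y.filter p) := by
  cases h with
  | idem u v i =>
      by_cases hi : p i
      · refine Relation.EqvGen.rel _ _ ?_
        have h1 : (u ++ [i, i] ++ v).filter p = u.filter p ++ [i, i] ++ v.filter p := by
          simp [List.filter_append, hi]
        have h2 : (u ++ [i] ++ v).filter p = u.filter p ++ [i] ++ v.filter p := by
          simp [List.filter_append, hi]
        rw [h1, h2]; exact KisStep.idem _ _ i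
      · have h1 : (u ++ [i, i] ++ v).filter p = (u ++ [i] ++ v).filter p := by
          simp [List.filter_append, hi]
        rw [h1]; exact Relation.EqvGen.refl _
  | left u v i j hij =>
      by_cases hi : p i
      · by_cases hj : p j
        · refine Relation.EqvGen.rel _ _ ?_
          have h1 : (u ++ [i, j, i] ++ v).filter p = u.filter p ++ [i, j, i] ++ v.filter p := by
            simp [List.filter_append, hi, hj]
          have h2 : (u ++ [i, j] ++ v).filter p = u.filter p ++ [i, j] ++ v.filter p := by
            simp [List.filter_append, hi, hj]
          rw [h1, h2]; exact KisStep.left _ _ i j hij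
        · refine Relation.EqvGen.rel _ _ ?_
          have h1 : (u ++ [i, j, i] ++ v).filter p = u.filter p ++ [i, i] ++ v.filter p := by
            simp [List.filter_append, hi, hj]
          have h2 : (u ++ [i, j] ++ v).filter p = u.filter p ++ [i] ++ v.filter p := by
            simp [List.filter_append, hi, hj]
          rw [h1, h2]; exact KisStep.idem _ _ i
      · by_cases hj : p j
        · have h1 : (u ++ [i, j, i] ++ v).filter p = (u ++ [i, j] ++ v).filter p := by
            simp [List.filter_append, hi, hj]
          rw [h1]; exact Relation.EqvGen.refl _
        · have h1 : (u ++ [i, j, i] ++ v).filter p = (u ++ [i, j] ++ v).filter p := by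
            simp [List.filter_append, hi, hj]
          rw [h1]; exact Relation.EqvGen.refl _
  | right u v i j hij =>
      by_cases hi : p i
      · by_cases hj : p j
        · refine Relation.EqvGen.rel _ _ ?_
          have h1 : (u ++ [j, i, j] ++ v).filter p = u.filter p ++ [j, i, j] ++ v.filter p := by
            simp [List.filter_append, hi, hj]
          have h2 : (u ++ [i, j] ++ v).filter p = u.filter p ++ [i, j] ++ v.filter p := by
            simp [List.filter_append, hi, hj]
          rw [h1, h2]; exact KisStep.right _ _ i j hij
        · have h1 : (u ++ [j, i, j] ++ v).filter p = (u ++ [i, j] ++ v).filter p := by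
            simp [List.filter_append, hi, hj]
          rw [h1]; exact Relation.EqvGen.refl _
      · by_cases hj : p j
        · refine Relation.EqvGen.rel _ _ ?_
          have h1 : (u ++ [j, i, j] ++ v).filter p = u.filter p ++ [j, j] ++ v.filter p := by
            simp [List.filter_append, hi, hj]
          have h2 : (u ++ [i, j] ++ v).filter p = u.filter p ++ [j] ++ v.filter p := by
            simp [List.filter_append, hi, hj]
          rw [h1, h2]; exact KisStep.idem _ _ j
        · have h1 : (u ++ [j, i, j] ++ v).filter p = (u ++ [i, j] ++ v).filter p := by
            simp [List.filter_append, hi, hj]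
          rw [h1]; exact Relation.EqvGen.refl _

lemma kisequiv_filter (p : Fin n → Bool) {x y : List (Fin n)} (h : KisEquiv x y) :
    KisEquiv (x.filter p) (y.filter p) := by
  induction h with
  | rel a b hab => exact kisstep_filter p hab
  | refl a => exact Relation.EqvGen.refl _
  | symm a b _ ih => exact Relation.EqvGen.symm _ _ ih
  | trans a b c _ _ ih₁ ih₂ => exact Relation.EqvGen.trans _ _ _ ih₁ ih₂

lemma filter_split_append {α : Type*} {p : α → Bool} :
    ∀ {l X Y : List α}, l.filter p = X ++ Y →
      ∃ l₁ l₂, l = l₁ ++ l₂ ∧ l₁.filter p = X ∧ l₂.filter p = Y := by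
  intro l
  induction l with
  | nil =>
      intro X Y h
      simp only [List.filter_nil] at h
      obtain ⟨hX, hY⟩ := List.append_eq_nil_iff.mp h.symm
      exact ⟨[], [], rfl, by simp [hX], by simp [hY]⟩
  | cons a t ih =>
      intro X Y h
      by_cases hp : p a
      · rw [List.filter_cons_of_pos hp] at h
        cases X with
        | nil =>
            exact ⟨[], a :: t, rfl, rfl, by rw [List.filter_cons_of_pos hp]; simpa using h⟩
        | cons x X' =>
            have hax : a = x := by simpa using congrArg (·.head?) h
            have ht : t.filter p = X' ++ Y := by
              have := congrArg (·.tail) h; simpa using this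
            obtain ⟨l₁, l₂, hl, h1, h2⟩ := ih ht
            exact ⟨a :: l₁, l₂, by rw [hl]; rfl, by
              rw [List.filter_cons_of_pos hp, h1, hax], h2⟩
      · rw [List.filter_cons_of_neg hp] at h
        obtain ⟨l₁, l₂, hl, h1, h2⟩ := ih h
        exact ⟨a :: l₁, l₂, by rw [hl]; rfl, by
          rw [List.filter_cons_of_neg hp, h1], h2⟩

lemma filter_split_cons {α : Type*} {p : α → Bool} :
    ∀ {l : List α} {b : α} {Y : List α}, l.filter p = b :: Y →
      ∃ l₁ l₂, l = l₁ ++ [b] ++ l₂ ∧ l₁.filter p = [] ∧ l₂.filter p = Y ∧ p b = true := by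
  intro l
  induction l with
  | nil => intro b Y h; simp at h
  | cons a t ih =>
      intro b Y h
      by_cases hp : p a
      · rw [List.filter_cons_of_pos hp] at h
        have hab : a = b := by simpa using congrArg (·.head?) h
        have ht : t.filter p = Y := by
          have := congrArg (·.tail) h; simpa using this
        exact ⟨[], t, by rw [hab]; rfl, rfl, ht, hab ▸ hp⟩
      · rw [List.filter_cons_of_neg hp] at h
        obtain ⟨l₁, l₂, hl, h1, h2, h3⟩ := ih h
        exact ⟨a :: l₁, l₂, by rw [hl]; rfl, by
          rw [List.filter_cons_of_neg hp, h1], h2, h3⟩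

end KisAux

namespace KisAux

lemma canonical_infix {w x : List (Fin n)} (hw : Canonical w) (hx : x <:+: w) :
    Canonical x := fun i u hu => hw i u (hu.trans hx)

lemma filterGE_append (k : Fin n) (x y : List (Fin n)) :
    filterGE k (x ++ y) = filterGE k x ++ filterGE k y := by simp [filterGE]

lemma filterGE_self (k : Fin n) : filterGE k [k] = [k] := by simp [filterGE]

lemma split3 {α : Type*} {i : α} {m a' w₂ : List α}
    (h : [i] ++ m ++ [i] = a' ++ w₂) :
    (a' = [] ∧ w₂ = [i] ++ m ++ [i]) ∨ (w₂ = [] ∧ a' = [i] ++ m ++ [i]) ∨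
    ∃ m₁ m₂, m = m₁ ++ m₂ ∧ a' = [i] ++ m₁ ∧ w₂ = m₂ ++ [i] := by
  cases a' with
  | nil => exact Or.inl ⟨rfl, by simpa using h.symm⟩
  | cons a as =>
    have hai : i = a := by simpa using congrArg (·.head?) h
    have h2 : m ++ [i] = as ++ w₂ := by
      have := congrArg (·.tail) h; simpa using this
    rcases List.eq_nil_or_concat w₂ with hw | ⟨ys, y, hys⟩
    · subst hw
      refine Or.inr (Or.inl ⟨rfl, ?_⟩)
      simpa using h.symm
    · rw [List.concat_eq_append] at hys
      subst hys
      have h3 : m ++ [i] = (as ++ ys) ++ [y] := by rw [h2]; simp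
      obtain ⟨hm, hiy⟩ := List.append_inj' h3 rfl
      have hiy' : i = y := by simpa using hiy
      refine Or.inr (Or.inr ⟨as, ys, hm, ?_, ?_⟩)
      · rw [← hai]; rfl
      · rw [← hiy']

lemma last_cases {α : Type*} {L m : List α} {i y : α} {Q : List α}
    (h : L ++ [i] ++ m = Q ++ [y]) : (m = [] ∧ i = y) ∨ y ∈ m := by
  rcases List.eq_nil_or_concat m with hm | ⟨m', b, hm⟩
  · subst hm
    have h' : L ++ [i] = Q ++ [y] := by simpa using h
    obtain ⟨_, h2⟩ := List.append_inj' h' rfl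
    exact Or.inl ⟨rfl, by simpa using h2⟩
  · rw [List.concat_eq_append] at hm
    subst hm
    have h3 : (L ++ [i] ++ m') ++ [b] = Q ++ [y] := by rw [← h]; simp
    obtain ⟨_, h2⟩ := List.append_inj' h3 rfl
    have hby : b = y := by simpa using h2
    exact Or.inr (by rw [← hby]; exact List.mem_append_right _ (List.mem_singleton_self b))

lemma cover {P C : List (Fin n)} (h1 : Canonical P) (h2 : Canonical C)
    (h3 : ∀ i L m₁ m₂ R, P = L ++ [i] ++ m₁ → C = m₂ ++ [i] ++ R →
      Special i (m₁ ++ m₂)) :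
    Canonical (P ++ C) := by
  intro i m hinf
  obtain ⟨L, R, hLR⟩ := hinf
  have hLR' : L ++ ([i] ++ m ++ [i] ++ R) = P ++ C := by
    rw [← hLR]; simp
  rcases List.append_eq_append_iff.mp hLR' with ⟨a', hPa, hXa⟩ | ⟨c', hLc, hCc⟩
  · have hXa' : ([i] ++ m ++ [i]) ++ R = a' ++ C := by rw [← hXa]
    rcases List.append_eq_append_iff.mp hXa' with ⟨w, haw, hRw⟩ | ⟨w₂, hw₂, hCw⟩
    · refine h1 i m ⟨L, w, ?_⟩
      simp [hPa, haw]
    · rcases split3 hw₂ with ⟨ha0, hw0⟩ | ⟨hw0, ha0⟩ | ⟨m₁, m₂, hm, ha0, hw0⟩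
      · refine h2 i m ⟨[], R, ?_⟩
        simp [hCw, hw0]
      · refine h1 i m ⟨L, [], ?_⟩
        simp [hPa, ha0]
      · have hs := h3 i L m₁ m₂ R (by simp [hPa, ha0]) (by simp [hCw, hw0])
        rw [hm]; exact hs
  · refine h2 i m ⟨c', R, ?_⟩
    simp [hCc]

lemma mixedBig {P S C V : List (Fin n)} {i : Fin n} {L m₁ m₂ R : List (Fin n)}
    (hW : Canonical (P ++ S)) (hP : P = L ++ [i] ++ m₁)
    (hC : Canonical C) (hCeq : C = m₂ ++ [i] ++ R)
    (hCV : KisEquiv C V) (hVS : filterGE i V = filterGE i S) :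
    ∃ j ∈ m₁ ++ m₂, i < j := by
  by_contra hcon
  push_neg at hcon
  -- i does not occur in m₂
  have him₂ : i ∉ m₂ := by
    intro hm
    obtain ⟨a₁, a₂, ha⟩ := List.append_of_mem hm
    have hinf : ([i] ++ a₂ ++ [i]) <:+: C := ⟨a₁, R, by rw [hCeq, ha]; simp⟩
    obtain ⟨g, hg, hgt⟩ := (hC i a₂ hinf).1
    have hgm : g ∈ m₁ ++ m₂ := by
      refine List.mem_append_right _ ?_
      rw [ha]; exact List.mem_append_right _ (List.mem_cons_of_mem _ hg)
    exact absurd hgt (not_lt.mpr (hcon g hgm))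
  have hm₂f : filterGE i m₂ = [] := by
    rw [filterGE, List.filter_eq_nil_iff]
    intro a ha
    simp only [decide_eq_true_eq]
    intro hle
    rcases lt_or_eq_of_le hle with hlt | heq
    · exact absurd hlt (not_lt.mpr (hcon a (List.mem_append_right _ ha)))
    · exact him₂ (by rw [heq]; exact ha)
  have hA : filterGE i C = i :: filterGE i R := by
    rw [hCeq, filterGE_append, filterGE_append, hm₂f, filterGE_self]
    rfl
  have h0 : KisEquiv (filterGE i C) (filterGE i S) := by
    have h0' := kisequiv_filter (fun a => decide (i ≤ a)) hCV
    rw [show List.filter (fun a => decide (i ≤ a)) C = filterGE i C from rfl,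
      show List.filter (fun a => decide (i ≤ a)) V = filterGE i V from rfl, hVS] at h0'
    exact h0'
  have hiC : i ∈ C := by rw [hCeq]; simp
  have hiV : i ∈ V := (kisequiv_mem hCV i).mp hiC
  have hiS : i ∈ S := by
    have h1 : i ∈ filterGE i V := List.mem_filter.mpr ⟨hiV, by simp⟩
    rw [hVS] at h1
    exact List.mem_of_mem_filter h1
  obtain ⟨S₀, S₁, hS, hiS₀⟩ := mem_first hiS
  have hB : filterGE i S = filterGE i S₀ ++ [i] ++ filterGE i S₁ := by
    rw [hS, filterGE_append, filterGE_append, filterGE_self]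
  have hiB₀ : i ∉ filterGE i S₀ := fun hmem => hiS₀ (List.mem_of_mem_filter hmem)
  have hspec : Special i (m₁ ++ S₀) := hW i (m₁ ++ S₀) ⟨L, S₁, by rw [hP, hS]; simp⟩
  obtain ⟨g, hg, hgt⟩ := hspec.1
  have hgS₀ : g ∈ S₀ := by
    rcases List.mem_append.mp hg with h' | h'
    · exact absurd hgt (not_lt.mpr (hcon g (List.mem_append_left _ h')))
    · exact h'
  have hgB₀ : g ∈ filterGE i S₀ :=
    List.mem_filter.mpr ⟨hgS₀, by simp [le_of_lt hgt]⟩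
  have UC : ∀ x b mm y, filterGE i S = x ++ [b] ++ mm ++ [b] ++ y →
      ∃ g' ∈ mm, b < g' := by
    intro x b mm y hdec
    have hdec' : List.filter (fun a => decide (i ≤ a)) S = x ++ ([b] ++ mm ++ [b] ++ y) := by
      rw [show List.filter (fun a => decide (i ≤ a)) S = filterGE i S from rfl, hdec]; simp
    obtain ⟨Sx, Sr, hS1, hfx, hfr⟩ := filter_split_append hdec'
    have hfr' : List.filter (fun a => decide (i ≤ a)) Sr = b :: (mm ++ [b] ++ y) := by
      rw [hfr]; rfl
    obtain ⟨pre, suf, hSr, hpre, hsuf, hpb⟩ := filter_split_cons hfr'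
    have hsuf' : List.filter (fun a => decide (i ≤ a)) suf = mm ++ ([b] ++ y) := by
      rw [hsuf]; simp
    obtain ⟨Smm, Srest, hsuf2, hfmm, hfrest⟩ := filter_split_append hsuf'
    obtain ⟨pre₂, suf₂, hSrest, hpre₂, hfsuf₂, _⟩ := filter_split_cons hfrest
    have hib : i ≤ b := by simpa using hpb
    have hinf : ([b] ++ (Smm ++ pre₂) ++ [b]) <:+: (P ++ S) :=
      ⟨P ++ Sx ++ pre, suf₂, by rw [hS1, hSr, hsuf2, hSrest]; simp⟩
    obtain ⟨g', hg', hbg'⟩ := (hW b (Smm ++ pre₂) hinf).1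
    rcases List.mem_append.mp hg' with h' | h'
    · refine ⟨g', ?_, hbg'⟩
      rw [← hfmm]
      exact List.mem_filter.mpr ⟨h', by
        simp only [decide_eq_true_eq]
        exact le_trans hib (le_of_lt hbg')⟩
    · exfalso
      have hnp := (List.filter_eq_nil_iff.mp hpre₂) g' h'
      simp only [decide_eq_true_eq] at hnp
      exact hnp (le_trans hib (le_of_lt hbg'))
  have hmain := mainLemma UC hB hiB₀ ⟨g, hgB₀, hgt⟩
  apply hmain
  have e2 : KisEquiv (i :: filterGE i C) (filterGE i C) := by
    rw [hA]
    have hstep : KisStep ([] ++ [i, i] ++ filterGE i R) ([] ++ [i] ++ filterGE i R) :=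
      KisStep.idem [] _ i
    simpa [KisEquiv] using Relation.EqvGen.rel _ _ hstep
  exact Relation.EqvGen.trans _ _ _
    (Relation.EqvGen.trans _ _ _ (kisequiv_cons i (Relation.EqvGen.symm _ _ h0)) e2) h0

end KisAux


/-- If `u ++ [1] ++ u' ++ [0] ++ v ++ [1] ++ v'` is canonical with `u, u', v, v'` having
all letters `≥ 2`, then both `u ++ [1] ++ u' ++ [0] ++ Can (v ++ v')` and
`u ++ [1] ++ Can (u' ++ v ++ v')` are canonical. -/
theorem stmt_11 {n : ℕ} (u u' v v' c d : List (Fin n)) (z o : Fin n)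
    (hz : (z : ℕ) = 0) (ho : (o : ℕ) = 1)
    (hu : ∀ a ∈ u, 2 ≤ (a : ℕ)) (hu' : ∀ a ∈ u', 2 ≤ (a : ℕ))
    (hv : ∀ a ∈ v, 2 ≤ (a : ℕ)) (hv' : ∀ a ∈ v', 2 ≤ (a : ℕ))
    (hcan : Canonical (u ++ [o] ++ u' ++ [z] ++ v ++ [o] ++ v'))
    (hc : Canonical c) (hcv : KisEquiv c (v ++ v'))
    (hd : Canonical d) (hdv : KisEquiv d (u' ++ v ++ v')) :
    Canonical (u ++ [o] ++ u' ++ [z] ++ c) ∧ Canonical (u ++ [o] ++ d) := by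
  constructor
  · have hco : Canonical ((u ++ [o] ++ u' ++ [z]) ++ c) := by
      refine KisAux.cover ?_ hc ?_
      · exact KisAux.canonical_infix hcan ⟨[], v ++ [o] ++ v', by simp⟩
      · intro i L m₁ m₂ R hP hC
        have hiC : i ∈ c := by rw [hC]; simp
        have hiV : i ∈ v ++ v' := (KisAux.kisequiv_mem hcv i).mp hiC
        have hi2 : 2 ≤ (i : ℕ) := by
          rcases List.mem_append.mp hiV with h' | h'
          · exact hv i h'
          · exact hv' i h'
        have hzm : z ∈ m₁ := by
          have hP' : L ++ [i] ++ m₁ = (u ++ [o] ++ u') ++ [z] := by rw [← hP]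
          rcases KisAux.last_cases hP' with ⟨hm, hiz⟩ | h'
          · exfalso
            have := congrArg Fin.val hiz
            omega
          · exact h'
        refine ⟨?_, ⟨z, List.mem_append_left _ hzm, ?_⟩⟩
        · refine KisAux.mixedBig (S := v ++ [o] ++ v') (V := v ++ v') ?_ hP hc hC hcv ?_
          · have he : (u ++ [o] ++ u' ++ [z]) ++ (v ++ [o] ++ v')
                = u ++ [o] ++ u' ++ [z] ++ v ++ [o] ++ v' := by simp
            rw [he]; exact hcan
          · have hno : (decide (i ≤ o)) = false := by
              simp only [decide_eq_false_iff_not]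
              rw [Fin.le_def]
              omega
            simp [filterGE, List.filter_append, hno]
        · rw [Fin.lt_def]; omega
    have he2 : (u ++ [o] ++ u' ++ [z]) ++ c = u ++ [o] ++ u' ++ [z] ++ c := by simp
    rw [← he2]
    exact hco
  · have hco : Canonical ((u ++ [o]) ++ d) := by
      refine KisAux.cover ?_ hd ?_
      · exact KisAux.canonical_infix hcan ⟨[], u' ++ [z] ++ v ++ [o] ++ v', by simp⟩
      · intro i L m₁ m₂ R hP hC
        have hiC : i ∈ d := by rw [hC]; simp
        have hiV : i ∈ u' ++ v ++ v' := (KisAux.kisequiv_mem hdv i).mp hiC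
        have hi2 : 2 ≤ (i : ℕ) := by
          rcases List.mem_append.mp hiV with h' | h'
          · rcases List.mem_append.mp h' with h'' | h''
            · exact hu' i h''
            · exact hv i h''
          · exact hv' i h'
        have hom : o ∈ m₁ := by
          have hP' : L ++ [i] ++ m₁ = u ++ [o] := hP.symm
          rcases KisAux.last_cases hP' with ⟨hm, hio⟩ | h'
          · exfalso
            have := congrArg Fin.val hio
            omega
          · exact h'
        refine ⟨?_, ⟨o, List.mem_append_left _ hom, ?_⟩⟩
        · refine KisAux.mixedBig (S := u' ++ [z] ++ v ++ [o] ++ v') (V := u' ++ v ++ v')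
            ?_ hP hd hC hdv ?_
          · have he : (u ++ [o]) ++ (u' ++ [z] ++ v ++ [o] ++ v')
                = u ++ [o] ++ u' ++ [z] ++ v ++ [o] ++ v' := by simp
            rw [he]; exact hcan
          · have hno : (decide (i ≤ o)) = false := by
              simp only [decide_eq_false_iff_not]
              rw [Fin.le_def]
              omega
            have hnz : (decide (i ≤ z)) = false := by
              simp only [decide_eq_false_iff_not]
              rw [Fin.le_def]
              omega
            simp [filterGE, List.filter_append, hno, hnz]
        · rw [Fin.lt_def]; omega
    have he2 : (u ++ [o]) ++ d = u ++ [o] ++ d := by simp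
    rw [← he2]
    exact hco
end

section
/- Let w be a word over Fin n and i a letter. If c is canonical with c ~ filter≥i w, and d is canonical with d ~ filter≥i (T_i w), then T_i c = d. (In the paper's notation: T_i Can_{{i,…,n}} w = Can_{{i,…,n}} T_i w.) -/
variable {n : ℕ}

namespace KisAux

open Relation List

variable {n : ℕ}

/-- Deletion rewriting system: delete an occurrence of `i` whose gap to a
neighboring occurrence of `i` is all-greater (A) or all-smaller (B). -/
inductive RStep : List (Fin n) → List (Fin n) → Prop
  | A : ∀ (u g v : List (Fin n)) (i : Fin n), (∀ a ∈ g, i < a) →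
      RStep (u ++ [i] ++ g ++ [i] ++ v) (u ++ [i] ++ g ++ v)
  | B : ∀ (u g v : List (Fin n)) (i : Fin n), (∀ a ∈ g, a < i) →
      RStep (u ++ [i] ++ g ++ [i] ++ v) (u ++ g ++ [i] ++ v)

def JustA (x : List (Fin n)) (i : Fin n) : Prop :=
  ∃ x' g, x = x' ++ [i] ++ g ∧ ∀ a ∈ g, i < a

def JustB (y : List (Fin n)) (i : Fin n) : Prop :=
  ∃ g y', y = g ++ [i] ++ y' ∧ ∀ a ∈ g, a < i

lemma rstep_of_justA {x : List (Fin n)} {i : Fin n} (h : JustA x i) (y : List (Fin n)) :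
    RStep (x ++ [i] ++ y) (x ++ y) := by
  obtain ⟨x', g, rfl, hg⟩ := h
  simpa [List.append_assoc] using RStep.A x' g y i hg

lemma rstep_of_justB {y : List (Fin n)} {i : Fin n} (h : JustB y i) (x : List (Fin n)) :
    RStep (x ++ [i] ++ y) (x ++ y) := by
  obtain ⟨g, y', rfl, hg⟩ := h
  simpa [List.append_assoc] using RStep.B x g y' i hg

lemma rstep_elim {w w' : List (Fin n)} (h : RStep w w') :
    ∃ x i y, w = x ++ [i] ++ y ∧ w' = x ++ y ∧ (JustA x i ∨ JustB y i) := by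
  cases h with
  | A u g v i hg =>
      exact ⟨u ++ [i] ++ g, i, v, by simp, by simp, Or.inl ⟨u, g, rfl, hg⟩⟩
  | B u g v i hg =>
      exact ⟨u, i, g ++ [i] ++ v, by simp, by simp, Or.inr ⟨g, v, rfl, hg⟩⟩

/-- Trichotomy for two marked positions in the same list. -/
lemma two_singleton_split {α : Type*} :
    ∀ (a : List α) (x : α) (b c : List α) (z : α) (d : List α),
      a ++ [x] ++ b = c ++ [z] ++ d →
      (∃ t, c = a ++ [x] ++ t ∧ b = t ++ [z] ++ d) ∨ (a = c ∧ x = z ∧ b = d) ∨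
      (∃ t, a = c ++ [z] ++ t ∧ d = t ++ [x] ++ b)
  | [], x, b, [], z, d, h => by
      simp_all
  | [], x, b, c' :: cs, z, d, h => by
      simp at h
      obtain ⟨rfl, rfl⟩ := h
      exact Or.inl ⟨cs, by simp, by simp⟩
  | a' :: as, x, b, [], z, d, h => by
      simp at h
      obtain ⟨rfl, rfl⟩ := h
      exact Or.inr (Or.inr ⟨as, by simp, by simp⟩)
  | a' :: as, x, b, c' :: cs, z, d, h => by
      simp at h
      obtain ⟨rfl, h⟩ := h
      rcases two_singleton_split as x b cs z d (by simpa using h) with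
        ⟨t, h1, h2⟩ | ⟨h1, h2, h3⟩ | ⟨t, h1, h2⟩
      · exact Or.inl ⟨t, by simp [h1], h2⟩
      · exact Or.inr (Or.inl ⟨by simp [h1], h2, h3⟩)
      · exact Or.inr (Or.inr ⟨t, by simp [h1], h2⟩)

lemma justB_mid {m y : List (Fin n)} {i j : Fin n}
    (h : JustB (m ++ [j] ++ y) i) :
    JustB (m ++ y) i ∨ (i = j ∧ ∀ a ∈ m, a < i) := by
  obtain ⟨g, r, he, hg⟩ := h
  rcases two_singleton_split m j y g i r he with
    ⟨t, rfl, rfl⟩ | ⟨rfl, rfl, rfl⟩ | ⟨t, rfl, rfl⟩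
  · refine Or.inl ⟨m ++ t, r, by simp, fun a ha => hg a (by simp only [List.mem_append, List.mem_singleton] at ha ⊢; tauto)⟩
  · exact Or.inr ⟨rfl, hg⟩
  · exact Or.inl ⟨g, t ++ y, by simp, hg⟩

end KisAux

namespace KisAux

variable {n : ℕ}

/-- Core of the strong-confluence argument: two deletable occurrences at
distinct positions either form an adjacent equal pair (same result), or both
deletions can be performed after each other. -/
lemma core (x m y : List (Fin n)) (i j : Fin n)
    (hi : JustA x i ∨ JustB (m ++ [j] ++ y) i)
    (hj : JustA (x ++ [i] ++ m) j ∨ JustB y j) :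
    (x ++ m ++ [j] ++ y = x ++ [i] ++ m ++ y) ∨
    ∃ w3, RStep (x ++ m ++ [j] ++ y) w3 ∧ RStep (x ++ [i] ++ m ++ y) w3 := by
  -- First: try to produce P1 : j deletable in w1, P2 : i deletable in w2.
  have finish : (JustA (x ++ m) j ∨ JustB y j) → (JustA x i ∨ JustB (m ++ y) i) →
      (x ++ m ++ [j] ++ y = x ++ [i] ++ m ++ y) ∨
      ∃ w3, RStep (x ++ m ++ [j] ++ y) w3 ∧ RStep (x ++ [i] ++ m ++ y) w3 := by
    intro P1 P2
    refine Or.inr ⟨x ++ m ++ y, ?_, ?_⟩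
    · rcases P1 with h | h
      · simpa [List.append_assoc] using rstep_of_justA h y
      · simpa [List.append_assoc] using rstep_of_justB h (x ++ m)
    · rcases P2 with h | h
      · simpa [List.append_assoc] using rstep_of_justA h (m ++ y)
      · simpa [List.append_assoc] using rstep_of_justB h x
  rcases hj with hjA | hjB
  · obtain ⟨z, g, hzg, hgall⟩ := hjA
    rcases two_singleton_split x i m z j g hzg with
      ⟨t, rfl, rfl⟩ | ⟨rfl, rfl, rfl⟩ | ⟨t, rfl, rfl⟩
    · -- z = x ++ [i] ++ t, m = t ++ [j] ++ g : the j-occurrence lies inside m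
      have P1 : JustA (x ++ (t ++ [j] ++ g)) j ∨ JustB y j :=
        Or.inl ⟨x ++ t, g, by simp, hgall⟩
      have P2 : JustA x i ∨ JustB ((t ++ [j] ++ g) ++ y) i := by
        rcases hi with hiA | hiB
        · exact Or.inl hiA
        · rcases justB_mid hiB with h' | ⟨rfl, hm⟩
          · exact Or.inr h'
          · exact absurd (hm i (by simp)) (lt_irrefl i)
      exact finish P1 P2
    · -- x = z, i = j, m = g : the second rule's pair is (marked i, marked i)? no:
      -- the j-occurrence IS the marked i; m = g is all > i.
      rcases hi with hiA | hiB
      · obtain ⟨x2, h2, rfl, hh2⟩ := hiA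
        have P1 : JustA ((x2 ++ [i] ++ h2) ++ m) i ∨ JustB y i := by
          refine Or.inl ⟨x2, h2 ++ m, by simp, fun a ha => ?_⟩
          simp only [List.mem_append] at ha
          rcases ha with h' | h'
          · exact hh2 a h'
          · exact hgall a h'
        exact finish P1 (Or.inl ⟨x2, h2, rfl, hh2⟩)
      · -- i deletable via a later i in m ++ [i] ++ y, but m is all > i ⇒ m = []
        obtain ⟨g', r', he, hg'⟩ := hiB
        rcases two_singleton_split m i y g' i r' he with
          ⟨t, rfl, rfl⟩ | ⟨rfl, -, rfl⟩ | ⟨t, rfl, rfl⟩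
        · exact absurd (hg' i (by simp)) (lt_irrefl i)
        · -- m = g' is all < i and all > i, hence empty
          have : m = [] := by
            cases m with
            | nil => rfl
            | cons a t => exact absurd (lt_trans (hg' a (by simp)) (hgall a (by simp))) (lt_irrefl a)
          subst this
          exact Or.inl (by simp)
        · exact absurd (hgall i (by simp)) (lt_irrefl i)
    · -- x = z ++ [j] ++ t, g = t ++ [i] ++ m : the j-occurrence lies inside x
      have ht : ∀ a ∈ t, j < a := fun a ha => hgall a (by simp [ha])
      have hm : ∀ a ∈ m, j < a := fun a ha => hgall a (by simp [ha])
      have hji : j < i := hgall i (by simp)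
      have P1 : JustA ((z ++ [j] ++ t) ++ m) j ∨ JustB y j := by
        refine Or.inl ⟨z, t ++ m, by simp, fun a ha => ?_⟩
        simp only [List.mem_append] at ha
        rcases ha with h' | h'
        · exact ht a h'
        · exact hm a h'
      have P2 : JustA (z ++ [j] ++ t) i ∨ JustB (m ++ y) i := by
        rcases hi with hiA | hiB
        · exact Or.inl hiA
        · rcases justB_mid hiB with h' | ⟨rfl, _⟩
          · exact Or.inr h'
          · exact absurd hji (lt_irrefl i)
      exact finish P1 P2
  · -- j deletable via a later j in y
    have P1 : JustA (x ++ m) j ∨ JustB y j := Or.inr hjB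
    have P2 : JustA x i ∨ JustB (m ++ y) i := by
      rcases hi with hiA | hiB
      · exact Or.inl hiA
      · rcases justB_mid hiB with h' | ⟨rfl, hm⟩
        · exact Or.inr h'
        · obtain ⟨g2, y2, rfl, hg2⟩ := hjB
          refine Or.inr ⟨m ++ g2, y2, by simp, fun a ha => ?_⟩
          simp only [List.mem_append] at ha
          rcases ha with h' | h'
          · exact hm a h'
          · exact hg2 a h'
    exact finish P1 P2

/-- Strong confluence of `RStep`. -/
lemma rstep_confl {w w1 w2 : List (Fin n)} (h1 : RStep w w1) (h2 : RStep w w2) :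
    w1 = w2 ∨ ∃ w3, RStep w1 w3 ∧ RStep w2 w3 := by
  obtain ⟨x1, i, y1, rfl, rfl, J1⟩ := rstep_elim h1
  obtain ⟨x2, j, y2, he, rfl, J2⟩ := rstep_elim h2
  rcases two_singleton_split x1 i y1 x2 j y2 he with
    ⟨t, rfl, rfl⟩ | ⟨rfl, rfl, rfl⟩ | ⟨t, rfl, rfl⟩
  · rcases core x1 t y2 i j J1 J2 with heq | ⟨w3, s1, s2⟩
    · exact Or.inl (by simpa [List.append_assoc] using heq)
    · exact Or.inr ⟨w3, by simpa [List.append_assoc] using s1,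
        by simpa [List.append_assoc] using s2⟩
  · exact Or.inl rfl
  · rcases core x2 t y1 j i J2 J1 with heq | ⟨w3, s1, s2⟩
    · exact Or.inl (by simpa [List.append_assoc] using heq.symm)
    · exact Or.inr ⟨w3, by simpa [List.append_assoc] using s2,
        by simpa [List.append_assoc] using s1⟩

end KisAux
namespace KisAux

open Relation

variable {n : ℕ}

/-- `[i] ++ g ++ [i] ~ [i] ++ g` when `g` is all `> i`. -/
lemma kis_A (i : Fin n) (g : List (Fin n)) (hg : ∀ a ∈ g, i < a) :
    ∀ u v, KisEquiv (u ++ [i] ++ g ++ [i] ++ v) (u ++ [i] ++ g ++ v) := by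
  induction g with
  | nil =>
      intro u v
      simpa [KisEquiv] using EqvGen.rel _ _ (KisStep.idem u v i)
  | cons j g' ih =>
      intro u v
      have hij : i < j := hg j (by simp)
      have e1 : KisEquiv (u ++ [i] ++ (j :: g') ++ [i] ++ v)
          (u ++ [i, j, i] ++ (g' ++ [i] ++ v)) :=
        EqvGen.symm _ _ (EqvGen.rel _ _
          (by simpa [List.append_assoc] using KisStep.left u (g' ++ [i] ++ v) i j hij))
      have e2 : KisEquiv (u ++ [i, j, i] ++ (g' ++ [i] ++ v))
          (u ++ [i, j, i] ++ (g' ++ v)) := by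
        have := ih (fun a ha => hg a (by simp [ha])) (u ++ [i, j]) v
        simpa [List.append_assoc] using this
      have e3 : KisEquiv (u ++ [i, j, i] ++ (g' ++ v)) (u ++ [i] ++ (j :: g') ++ v) :=
        EqvGen.rel _ _ (by simpa [List.append_assoc] using KisStep.left u (g' ++ v) i j hij)
      exact EqvGen.trans _ _ _ (EqvGen.trans _ _ _ e1 e2) e3

/-- `[i] ++ g ++ [i] ~ g ++ [i]` when `g` is all `< i`. -/
lemma kis_B (i : Fin n) (g : List (Fin n)) (hg : ∀ a ∈ g, a < i) :
    ∀ u v, KisEquiv (u ++ [i] ++ g ++ [i] ++ v) (u ++ g ++ [i] ++ v) := by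
  induction g using List.reverseRecOn with
  | nil =>
      intro u v
      simpa [KisEquiv] using EqvGen.rel _ _ (KisStep.idem u v i)
  | append_singleton g' j ih =>
      intro u v
      have hji : j < i := hg j (by simp)
      have e1 : KisEquiv (u ++ [i] ++ (g' ++ [j]) ++ [i] ++ v)
          ((u ++ [i] ++ g') ++ [i, j, i] ++ v) :=
        EqvGen.symm _ _ (EqvGen.rel _ _
          (by simpa [List.append_assoc] using KisStep.right (u ++ [i] ++ g') v j i hji))
      have e2 : KisEquiv ((u ++ [i] ++ g') ++ [i, j, i] ++ v)
          ((u ++ g') ++ [i, j, i] ++ v) := by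
        have := ih (fun a ha => hg a (by simp [ha])) u ([j] ++ [i] ++ v)
        simpa [List.append_assoc] using this
      have e3 : KisEquiv ((u ++ g') ++ [i, j, i] ++ v) (u ++ (g' ++ [j]) ++ [i] ++ v) :=
        EqvGen.rel _ _ (by simpa [List.append_assoc] using KisStep.right (u ++ g') v j i hji)
      exact EqvGen.trans _ _ _ (EqvGen.trans _ _ _ e1 e2) e3

lemma kisStep_rstep {x y : List (Fin n)} (h : KisStep x y) : RStep x y := by
  cases h with
  | idem u v i => simpa using RStep.A u [] v i (by simp)
  | left u v i j hij => simpa using RStep.A u [j] v i (by simpa using hij)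
  | right u v i j hij => simpa using RStep.B u [i] v j (by simpa using hij)

lemma rstep_kisEquiv {x y : List (Fin n)} (h : RStep x y) : KisEquiv x y := by
  cases h with
  | A u g v i hg => exact kis_A i g hg u v
  | B u g v i hg => exact kis_B i g hg u v

lemma kisEquiv_iff {x y : List (Fin n)} : KisEquiv x y ↔ EqvGen RStep x y := by
  constructor
  · intro h
    unfold KisEquiv at h
    induction h with
    | rel a b hab => exact EqvGen.rel _ _ (kisStep_rstep hab)
    | refl a => exact EqvGen.refl a
    | symm a b _ ih => exact EqvGen.symm _ _ ih
    | trans a b c _ _ ih1 ih2 => exact EqvGen.trans _ _ _ ih1 ih2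
  · intro h
    induction h with
    | rel a b hab => exact rstep_kisEquiv hab
    | refl a => exact EqvGen.refl a
    | symm a b _ ih => exact EqvGen.symm _ _ ih
    | trans a b c _ _ ih1 ih2 => exact EqvGen.trans _ _ _ ih1 ih2

lemma rstep_mem {x y : List (Fin n)} (h : RStep x y) (a : Fin n) : a ∈ x ↔ a ∈ y := by
  cases h <;> simp only [List.mem_append, List.mem_singleton, List.mem_cons] <;> tauto

lemma eqv_mem {x y : List (Fin n)} (h : EqvGen RStep x y) (a : Fin n) : a ∈ x ↔ a ∈ y := by
  induction h with
  | rel _ _ hab => exact rstep_mem hab a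
  | refl _ => exact Iff.rfl
  | symm _ _ _ ih => exact ih.symm
  | trans _ _ _ _ _ ih1 ih2 => exact ih1.trans ih2

/- trunc lemmas -/

lemma trunc_append_of_mem {k : Fin n} : ∀ {u : List (Fin n)}, k ∈ u →
    ∀ z, trunc k (u ++ z) = trunc k u ++ z := by
  intro u
  induction u with
  | nil => intro h; cases h
  | cons a t ih =>
      intro h z
      by_cases hak : a = k
      · subst hak; simp [trunc]
      · have : k ∈ t := by
          rcases List.mem_cons.1 h with h' | h'
          · exact absurd h'.symm hak
          · exact h'
        simp [trunc, hak, ih this z]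

lemma trunc_append_of_not_mem {k : Fin n} : ∀ {u : List (Fin n)}, k ∉ u →
    ∀ z, trunc k (u ++ z) = trunc k z := by
  intro u
  induction u with
  | nil => intro _ z; rfl
  | cons a t ih =>
      intro h z
      have hak : a ≠ k := fun e => h (by simp [e])
      have hkt : k ∉ t := fun e => h (by simp [e])
      simp [trunc, hak, ih hkt z]

lemma trunc_suffix (k : Fin n) : ∀ w : List (Fin n), trunc k w <:+ w := by
  intro w
  induction w with
  | nil => simp [trunc]
  | cons a t ih =>
      by_cases hak : a = k
      · simp [trunc, hak]
      · simpa [trunc, hak] using ih.trans (List.suffix_cons a t)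

lemma trunc_filterGE (i : Fin n) : ∀ w : List (Fin n),
    trunc i (filterGE i w) = filterGE i (trunc i w) := by
  intro w
  induction w with
  | nil => rfl
  | cons a t ih =>
      by_cases hai : a = i
      · subst hai
        simp [filterGE, trunc, List.filter_cons]
      · by_cases hia : i ≤ a
        · simpa [filterGE, trunc, List.filter_cons, hia, hai] using ih
        · simpa [filterGE, trunc, List.filter_cons, hia, hai] using ih

end KisAux
namespace KisAux

open Relation

variable {n : ℕ}

/-- Truncation at the minimum letter is compatible with a rewriting step. -/
lemma trunc_rstep {k : Fin n} {x y : List (Fin n)} (h : RStep x y)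
    (hall : ∀ a ∈ x, k ≤ a) :
    trunc k x = trunc k y ∨ RStep (trunc k x) (trunc k y) := by
  cases h with
  | A u g v i hg =>
      by_cases hku : k ∈ u
      · right
        rw [show u ++ [i] ++ g ++ [i] ++ v = u ++ ([i] ++ g ++ [i] ++ v) by
              simp [List.append_assoc],
            show u ++ [i] ++ g ++ v = u ++ ([i] ++ g ++ v) by simp [List.append_assoc],
            trunc_append_of_mem hku, trunc_append_of_mem hku]
        simpa [List.append_assoc] using RStep.A (trunc k u) g v i hg
      · have hik : k ≤ i := hall i (by simp)
        by_cases hike : i = k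
        · subst hike
          right
          rw [show u ++ [i] ++ g ++ [i] ++ v = u ++ ([i] ++ (g ++ [i] ++ v)) by
                simp [List.append_assoc],
              show u ++ [i] ++ g ++ v = u ++ ([i] ++ (g ++ v)) by simp [List.append_assoc],
              trunc_append_of_not_mem hku, trunc_append_of_not_mem hku]
          simpa [trunc, List.append_assoc] using RStep.A [] g v i hg
        · left
          have hkg : k ∉ g := fun hkg =>
            absurd (lt_of_le_of_lt hik (hg k hkg)) (lt_irrefl k)
          have h1 : k ∉ u ++ [i] ++ g ++ [i] := by
            simp only [List.mem_append, List.mem_singleton]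
            rintro (((h' | h') | h') | h')
            · exact hku h'
            · exact hike h'.symm
            · exact hkg h'
            · exact hike h'.symm
          have h2 : k ∉ u ++ [i] ++ g := by
            simp only [List.mem_append, List.mem_singleton]
            rintro ((h' | h') | h')
            · exact hku h'
            · exact hike h'.symm
            · exact hkg h'
          rw [show u ++ [i] ++ g ++ [i] ++ v = (u ++ [i] ++ g ++ [i]) ++ v by
                simp [List.append_assoc],
              show u ++ [i] ++ g ++ v = (u ++ [i] ++ g) ++ v by simp [List.append_assoc],
              trunc_append_of_not_mem h1, trunc_append_of_not_mem h2]
  | B u g v i hg =>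
      by_cases hku : k ∈ u
      · right
        rw [show u ++ [i] ++ g ++ [i] ++ v = u ++ ([i] ++ g ++ [i] ++ v) by
              simp [List.append_assoc],
            show u ++ g ++ [i] ++ v = u ++ (g ++ [i] ++ v) by simp [List.append_assoc],
            trunc_append_of_mem hku, trunc_append_of_mem hku]
        simpa [List.append_assoc] using RStep.B (trunc k u) g v i hg
      · have hik : k ≤ i := hall i (by simp)
        by_cases hike : i = k
        · subst hike
          have hge : g = [] := by
            cases g with
            | nil => rfl
            | cons a t =>
                exact absurd (lt_of_le_of_lt (hall a (by simp)) (hg a (by simp)))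
                  (lt_irrefl i)
          subst hge
          right
          rw [show u ++ [i] ++ [] ++ [i] ++ v = u ++ ([i] ++ ([] ++ ([i] ++ v))) by
                simp [List.append_assoc],
              show u ++ [] ++ [i] ++ v = u ++ ([i] ++ v) by simp,
              trunc_append_of_not_mem hku, trunc_append_of_not_mem hku]
          simpa [trunc] using RStep.A [] [] v i (by simp)
        · left
          have h1 : k ∉ u ++ [i] := by
            simp only [List.mem_append, List.mem_singleton]
            rintro (h' | h')
            · exact hku h'
            · exact hike h'.symm
          rw [show u ++ [i] ++ g ++ [i] ++ v = (u ++ [i]) ++ (g ++ [i] ++ v) by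
                simp [List.append_assoc],
              show u ++ g ++ [i] ++ v = u ++ (g ++ [i] ++ v) by simp [List.append_assoc],
              trunc_append_of_not_mem h1, trunc_append_of_not_mem hku]

lemma trunc_eqv {k : Fin n} {x y : List (Fin n)} (h : EqvGen RStep x y) :
    (∀ a ∈ x, k ≤ a) → EqvGen RStep (trunc k x) (trunc k y) := by
  induction h with
  | rel a b hab =>
      intro hall
      rcases trunc_rstep hab hall with h' | h'
      · rw [h']; exact EqvGen.refl _
      · exact EqvGen.rel _ _ h'
  | refl a => intro _; exact EqvGen.refl _
  | symm a b hab ih =>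
      intro hall
      exact EqvGen.symm _ _ (ih fun a' ha' => hall a' ((eqv_mem hab a').1 ha'))
  | trans a b c hab hbc ih1 ih2 =>
      intro hall
      exact EqvGen.trans _ _ _ (ih1 hall)
        (ih2 fun a' ha' => hall a' ((eqv_mem hab a').2 ha'))

/- canonical words -/

lemma canonical_suffix {c s : List (Fin n)} (hc : Canonical c) (hs : s <:+ c) :
    Canonical s := fun i u hinf => hc i u (hinf.trans hs.isInfix)

lemma canonical_irred {c y : List (Fin n)} (hc : Canonical c) (h : RStep c y) : False := by
  cases h with
  | A u g v i hg =>
      obtain ⟨-, j, hj, hji⟩ := hc i g ⟨u, v, by simp [List.append_assoc]⟩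
      exact absurd (hg j hj) (not_lt.2 hji.le)
  | B u g v i hg =>
      obtain ⟨⟨j, hj, hij⟩, -⟩ := hc i g ⟨u, v, by simp [List.append_assoc]⟩
      exact absurd (hg j hj) (not_lt.2 hij.le)

lemma canonical_nf {c z : List (Fin n)} (hc : Canonical c)
    (h : Relation.ReflTransGen RStep c z) : c = z := by
  rcases Relation.ReflTransGen.cases_head h with h' | ⟨b, hb, -⟩
  · exact h'
  · exact absurd hb (fun hb => canonical_irred hc hb)

lemma canonical_unique {c d : List (Fin n)} (hc : Canonical c) (hd : Canonical d)
    (h : EqvGen RStep c d) : c = d := by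
  have conf : ∀ a b c' : List (Fin n), RStep a b → RStep a c' →
      ∃ d', Relation.ReflGen RStep b d' ∧ Relation.ReflTransGen RStep c' d' := by
    intro a b c' h1 h2
    rcases rstep_confl h1 h2 with he | ⟨w3, s1, s2⟩
    · exact ⟨c', by rw [he], Relation.ReflTransGen.refl⟩
    · exact ⟨w3, Relation.ReflGen.single s1, Relation.ReflTransGen.single s2⟩
  have E := Relation.equivalence_join_reflTransGen conf
  have hj : Relation.Join (Relation.ReflTransGen RStep) c d := by
    clear hc hd
    induction h with
    | rel a b hab => exact ⟨b, Relation.ReflTransGen.single hab, Relation.ReflTransGen.refl⟩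
    | refl a => exact E.refl a
    | symm a b _ ih => exact E.symm ih
    | trans a b c' _ _ ih1 ih2 => exact E.trans ih1 ih2
  obtain ⟨z, h1, h2⟩ := hj
  rw [canonical_nf hc h1, canonical_nf hd h2]

lemma filterGE_all (k : Fin n) (w : List (Fin n)) : ∀ a ∈ filterGE k w, k ≤ a := by
  intro a ha
  simpa [filterGE] using (List.mem_filter.1 ha).2

end KisAux
/-- `T_i Can_{{i,…,n}} w = Can_{{i,…,n}} T_i w`. -/
theorem stmt_12 {n : ℕ} (w c d : List (Fin n)) (i : Fin n)
    (hc : Canonical c) (hcw : KisEquiv c (filterGE i w))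
    (hd : Canonical d) (hdw : KisEquiv d (filterGE i (trunc i w))) :
    trunc i c = d := by
  have hcr : Relation.EqvGen KisAux.RStep c (filterGE i w) := KisAux.kisEquiv_iff.1 hcw
  have hdr : Relation.EqvGen KisAux.RStep d (filterGE i (trunc i w)) :=
    KisAux.kisEquiv_iff.1 hdw
  have hallc : ∀ a ∈ c, i ≤ a := fun a ha =>
    KisAux.filterGE_all i w a ((KisAux.eqv_mem hcr a).1 ha)
  have h2 := KisAux.trunc_eqv hcr hallc
  rw [KisAux.trunc_filterGE] at h2
  exact KisAux.canonical_unique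
    (KisAux.canonical_suffix hc (KisAux.trunc_suffix i c)) hd
    (Relation.EqvGen.trans _ _ _ h2 (Relation.EqvGen.symm _ _ hdr))
end

section
/- Let w be a word over Fin n and k a letter. If c is canonical with c ~ w, d is canonical with d ~ filter≥k w, and e is canonical with e ~ filter≥k c, then d = e. (In the paper's notation: Can_{{k,…,n}} w = Can_{{k,…,n}} Can w.) -/
variable {n : ℕ}

inductive Del : List (Fin n) → List (Fin n) → Prop
  | A : ∀ (u m v : List (Fin n)) (i : Fin n), (∀ a ∈ m, a ≤ i) →
      Del (u ++ i :: (m ++ i :: v)) (u ++ (m ++ i :: v))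
  | B : ∀ (u m v : List (Fin n)) (i : Fin n), (∀ a ∈ m, i ≤ a) →
      Del (u ++ i :: (m ++ i :: v)) (u ++ i :: (m ++ v))

lemma two_marks {α : Type*} : ∀ {u1 : List α} {u2 : List α} {a b : α} {v1 v2 : List α},
    u1 ++ a :: v1 = u2 ++ b :: v2 →
    (u1 = u2 ∧ a = b ∧ v1 = v2) ∨ (∃ w, u2 = u1 ++ a :: w ∧ v1 = w ++ b :: v2) ∨
      (∃ w, u1 = u2 ++ b :: w ∧ v2 = w ++ a :: v1) := by
  intro u1
  induction u1 with
  | nil =>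
    intro u2 a b v1 v2 h
    cases u2 with
    | nil => simp_all
    | cons c u2' =>
      simp only [List.nil_append, List.cons_append, List.cons.injEq] at h
      exact Or.inr (Or.inl ⟨u2', by simp [h.1, h.2], h.2⟩)
  | cons c u1' ih =>
    intro u2 a b v1 v2 h
    cases u2 with
    | nil =>
      simp only [List.nil_append, List.cons_append, List.cons.injEq] at h
      exact Or.inr (Or.inr ⟨u1', by simp [h.1, h.2], h.2.symm⟩)
    | cons c2 u2' =>
      simp only [List.cons_append, List.cons.injEq] at h
      obtain ⟨rfl, h2⟩ := h
      rcases ih h2 with ⟨h1, h2, h3⟩ | ⟨w, hw1, hw2⟩ | ⟨w, hw1, hw2⟩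
      · exact Or.inl ⟨by rw [h1], h2, h3⟩
      · exact Or.inr (Or.inl ⟨w, by simp [hw1], hw2⟩)
      · exact Or.inr (Or.inr ⟨w, by simp [hw1], hw2⟩)

/-- Result of a deletion rule: `true` = delete right mark, `false` = delete left mark. -/
def rs (b : Bool) (u : List (Fin n)) (i : Fin n) (m v : List (Fin n)) : List (Fin n) :=
  if b then u ++ i :: (m ++ v) else u ++ (m ++ i :: v)

/-- Side condition of a deletion rule. -/
def Cnd (b : Bool) (i : Fin n) (m : List (Fin n)) : Prop :=
  ∀ a ∈ m, if b then i ≤ a else a ≤ i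

lemma del_rs {b : Bool} {u m v : List (Fin n)} {i : Fin n} {x y : List (Fin n)}
    (h : Cnd b i m) (hx : x = u ++ i :: (m ++ i :: v)) (hy : y = rs b u i m v) : Del x y := by
  subst hx hy
  cases b with
  | false => exact Del.A u m v i (by simpa [Cnd] using h)
  | true => exact Del.B u m v i (by simpa [Cnd] using h)

lemma del_iff {x y : List (Fin n)} : Del x y ↔
    ∃ b u i m v, Cnd b i m ∧ x = u ++ i :: (m ++ i :: v) ∧ y = rs b u i m v := by
  constructor
  · rintro (⟨u, m, v, i, h⟩ | ⟨u, m, v, i, h⟩)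
    · exact ⟨false, u, i, m, v, by simpa [Cnd] using h, rfl, rfl⟩
    · exact ⟨true, u, i, m, v, by simpa [Cnd] using h, rfl, rfl⟩
  · rintro ⟨b, u, i, m, v, h, hx, hy⟩
    exact del_rs h hx hy

lemma rs_append (b : Bool) (u : List (Fin n)) (i : Fin n) (m v r : List (Fin n)) :
    rs b u i m (v ++ r) = rs b u i m v ++ r := by cases b <;> simp [rs]

lemma rs_eq (b : Bool) (u : List (Fin n)) (i : Fin n) (m v : List (Fin n)) :
    rs b u i m v = u ++ rs b [] i m v := by cases b <;> simp [rs]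

lemma mem_rs_nil {b : Bool} {i a : Fin n} {m v : List (Fin n)}
    (h : a ∈ rs b [] i m v) : a = i ∨ a ∈ m ∨ a ∈ v := by
  cases b <;> simp only [rs, if_true, if_false, Bool.false_eq_true, ite_true, ite_false,
    List.nil_append, List.mem_append, List.mem_cons] at h <;> tauto

lemma const_shift {m : List (Fin n)} {i : Fin n} (h : ∀ a ∈ m, a = i) (v : List (Fin n)) :
    m ++ i :: v = i :: (m ++ v) := by
  induction m with
  | nil => rfl
  | cons a t ih =>
    have ha : a = i := h a (by simp)
    have := ih (fun x hx => h x (by simp [hx]))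
    simp [ha, this]

/-- The symmetric goal of the diamond lemma. -/
def DGoal (y z : List (Fin n)) : Prop := y = z ∨ ∃ w, Del y w ∧ Del z w

lemma DGoal.symm {y z : List (Fin n)} (h : DGoal y z) : DGoal z y := by
  rcases h with h | ⟨w, h1, h2⟩
  · exact Or.inl h.symm
  · exact Or.inr ⟨w, h2, h1⟩

lemma cnd_split {b : Bool} {i : Fin n} {p q : List (Fin n)} (h : Cnd b i (p ++ q)) :
    Cnd b i p ∧ Cnd b i q := by
  constructor <;> intro a ha <;> exact h a (by simp [ha])

lemma cnd_elt {b : Bool} {i j : Fin n} {p q : List (Fin n)} (h : Cnd b i (p ++ j :: q)) :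
    Cnd b i p ∧ (if b then i ≤ j else j ≤ i) ∧ Cnd b i q := by
  refine ⟨fun a ha => h a (by simp [ha]), h j (by simp), fun a ha => h a (by simp [ha])⟩

lemma cnd_app {b : Bool} {i : Fin n} {p q : List (Fin n)} (hp : Cnd b i p) (hq : Cnd b i q) :
    Cnd b i (p ++ q) := by
  intro a ha
  rcases List.mem_append.mp ha with h | h
  · exact hp a h
  · exact hq a h

lemma cnd_capp {b : Bool} {i j : Fin n} {p q : List (Fin n)} (hp : Cnd b i p)
    (hj : if b then i ≤ j else j ≤ i) (hq : Cnd b i q) : Cnd b i (p ++ j :: q) := by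
  intro a ha
  rcases List.mem_append.mp ha with h | h
  · exact hp a h
  · rcases List.mem_cons.mp h with rfl | h
    · exact hj
    · exact hq a h

lemma alpha1 (b1 b2 : Bool) (u m v : List (Fin n)) (i : Fin n)
    (hc1 : Cnd b1 i m) (hc2 : Cnd b2 i m) : DGoal (rs b1 u i m v) (rs b2 u i m v) := by
  cases b1 <;> cases b2
  · exact Or.inl rfl
  · refine Or.inl ?_
    have heq : ∀ a ∈ m, a = i := fun a ha => le_antisymm (by simpa using hc1 a ha)
      (by simpa using hc2 a ha)
    simp only [rs, if_true, if_false, Bool.false_eq_true, ite_true, ite_false]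
    rw [const_shift heq]
  · refine Or.inl ?_
    have heq : ∀ a ∈ m, a = i := fun a ha => le_antisymm (by simpa using hc2 a ha)
      (by simpa using hc1 a ha)
    simp only [rs, if_true, if_false, Bool.false_eq_true, ite_true, ite_false]
    rw [const_shift heq]
  · exact Or.inl rfl

lemma alpha2 (b1 b2 : Bool) (u : List (Fin n)) (i : Fin n) (m1 w v2 : List (Fin n))
    (hc1 : Cnd b1 i m1) (hc2 : Cnd b2 i (m1 ++ i :: w)) :
    DGoal (rs b1 u i m1 (w ++ i :: v2)) (rs b2 u i (m1 ++ i :: w) v2) := by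
  obtain ⟨hc2m, -, hc2w⟩ := cnd_elt hc2
  cases b1 <;> cases b2
  · exact Or.inl (by simp [rs])
  · refine Or.inr ⟨u ++ (m1 ++ i :: (w ++ v2)), ?_, ?_⟩
    · exact del_rs (b := true) (u := u ++ m1) (m := w) (v := v2) hc2w
        (by simp [rs]) (by simp [rs])
    · exact del_rs (b := false) (u := u) (m := m1) (v := w ++ v2) hc1
        (by simp [rs]) (by simp [rs])
  · refine Or.inr ⟨u ++ ((m1 ++ w) ++ i :: v2), ?_, ?_⟩
    · exact del_rs (b := false) (u := u) (m := m1 ++ w) (v := v2) (cnd_app hc2m hc2w)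
        (by simp [rs]) (by simp [rs])
    · exact del_rs (b := false) (u := u ++ m1) (m := w) (v := v2) hc2w
        (by simp [rs]) (by simp [rs])
  · refine Or.inr ⟨u ++ i :: ((m1 ++ w) ++ v2), ?_, ?_⟩
    · exact del_rs (b := true) (u := u) (m := m1 ++ w) (v := v2) (cnd_app hc1 hc2w)
        (by simp [rs]) (by simp [rs])
    · exact del_rs (b := true) (u := u) (m := m1) (v := w ++ v2) hc1
        (by simp [rs]) (by simp [rs])

lemma beta1 (b1 b2 : Bool) (u1 : List (Fin n)) (i : Fin n) (m1 m2 v2 : List (Fin n))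
    (hc1 : Cnd b1 i m1) (hc2 : Cnd b2 i m2) :
    DGoal (rs b1 u1 i m1 (m2 ++ i :: v2)) (rs b2 (u1 ++ i :: m1) i m2 v2) := by
  cases b1 <;> cases b2
  · refine Or.inr ⟨u1 ++ (m1 ++ (m2 ++ i :: v2)), ?_, ?_⟩
    · exact del_rs (b := false) (u := u1 ++ m1) (m := m2) (v := v2) hc2
        (by simp [rs]) (by simp [rs])
    · exact del_rs (b := false) (u := u1) (m := m1 ++ m2) (v := v2) (cnd_app hc1 hc2)
        (by simp [rs]) (by simp [rs])
  · refine Or.inr ⟨u1 ++ (m1 ++ i :: (m2 ++ v2)), ?_, ?_⟩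
    · exact del_rs (b := true) (u := u1 ++ m1) (m := m2) (v := v2) hc2
        (by simp [rs]) (by simp [rs])
    · exact del_rs (b := false) (u := u1) (m := m1) (v := m2 ++ v2) hc1
        (by simp [rs]) (by simp [rs])
  · exact Or.inl (by simp [rs])
  · refine Or.inr ⟨u1 ++ i :: ((m1 ++ m2) ++ v2), ?_, ?_⟩
    · exact del_rs (b := true) (u := u1) (m := m1 ++ m2) (v := v2) (cnd_app hc1 hc2)
        (by simp [rs]) (by simp [rs])
    · exact del_rs (b := true) (u := u1) (m := m1) (v := m2 ++ v2) hc1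
        (by simp [rs]) (by simp [rs])

lemma beta3a (b1 b2 : Bool) (u1 : List (Fin n)) (i : Fin n) (w1 w2 v1 : List (Fin n))
    (hc1 : Cnd b1 i (w1 ++ i :: w2)) (hc2 : Cnd b2 i w2) :
    DGoal (rs b1 u1 i (w1 ++ i :: w2) v1) (rs b2 (u1 ++ i :: w1) i w2 v1) := by
  obtain ⟨hc1w1, -, hc1w2⟩ := cnd_elt hc1
  cases b1 <;> cases b2
  · refine Or.inr ⟨u1 ++ (w1 ++ (w2 ++ i :: v1)), ?_, ?_⟩
    · exact del_rs (b := false) (u := u1 ++ w1) (m := w2) (v := v1) hc1w2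
        (by simp [rs]) (by simp [rs])
    · exact del_rs (b := false) (u := u1) (m := w1 ++ w2) (v := v1) (cnd_app hc1w1 hc1w2)
        (by simp [rs]) (by simp [rs])
  · refine Or.inr ⟨u1 ++ (w1 ++ i :: (w2 ++ v1)), ?_, ?_⟩
    · exact del_rs (b := true) (u := u1 ++ w1) (m := w2) (v := v1) hc2
        (by simp [rs]) (by simp [rs])
    · exact del_rs (b := false) (u := u1) (m := w1) (v := w2 ++ v1) hc1w1
        (by simp [rs]) (by simp [rs])
  · refine Or.inl ?_
    have heq : ∀ a ∈ w2, a = i := fun a ha => le_antisymm (by simpa using hc2 a ha)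
      (by simpa using hc1w2 a ha)
    simp only [rs, if_true, if_false, Bool.false_eq_true, ite_true, ite_false]
    rw [const_shift heq]
    simp
  · exact Or.inl (by simp [rs])

lemma beta3c (b1 b2 : Bool) (u1 : List (Fin n)) (i j : Fin n) (w1 w2 w3 v2 : List (Fin n))
    (hc1 : Cnd b1 i (w1 ++ j :: w2)) (hc2 : Cnd b2 j (w2 ++ i :: w3)) :
    DGoal (rs b1 u1 i (w1 ++ j :: w2) (w3 ++ j :: v2))
      (rs b2 (u1 ++ i :: w1) j (w2 ++ i :: w3) v2) := by
  obtain ⟨hc1w1, hc1j, hc1w2⟩ := cnd_elt hc1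
  obtain ⟨hc2w2, hc2i, hc2w3⟩ := cnd_elt hc2
  cases b1 <;> cases b2
  · have hij : i = j := le_antisymm (by simpa using hc2i) (by simpa using hc1j)
    subst hij
    refine Or.inr ⟨u1 ++ (w1 ++ (w2 ++ i :: (w3 ++ i :: v2))), ?_, ?_⟩
    · exact del_rs (b := false) (u := u1 ++ w1) (m := w2) (v := w3 ++ i :: v2) hc1w2
        (by simp [rs]) (by simp [rs])
    · exact del_rs (b := false) (u := u1) (m := w1 ++ w2) (v := w3 ++ i :: v2)
        (cnd_app hc1w1 hc1w2) (by simp [rs]) (by simp [rs])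
  · refine Or.inr ⟨u1 ++ (w1 ++ j :: (w2 ++ i :: (w3 ++ v2))), ?_, ?_⟩
    · exact del_rs (b := true) (u := u1 ++ w1) (i := j) (m := w2 ++ i :: w3) (v := v2) hc2
        (by simp [rs]) (by simp [rs])
    · exact del_rs (b := false) (u := u1) (m := w1 ++ j :: w2) (v := w3 ++ v2) hc1
        (by simp [rs]) (by simp [rs])
  · refine Or.inr ⟨u1 ++ i :: (w1 ++ (w2 ++ (w3 ++ j :: v2))), ?_, ?_⟩
    · exact del_rs (b := false) (u := u1 ++ i :: w1) (i := j) (m := w2 ++ w3) (v := v2)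
        (cnd_app hc2w2 hc2w3) (by simp [rs]) (by simp [rs])
    · exact del_rs (b := true) (u := u1) (m := w1 ++ w2) (v := w3 ++ j :: v2)
        (cnd_app hc1w1 hc1w2) (by simp [rs]) (by simp [rs])
  · have hij : i = j := le_antisymm (by simpa using hc1j) (by simpa using hc2i)
    subst hij
    refine Or.inr ⟨u1 ++ i :: (w1 ++ i :: (w2 ++ (w3 ++ v2))), ?_, ?_⟩
    · exact del_rs (b := true) (u := u1 ++ i :: w1) (m := w2 ++ w3) (v := v2)
        (cnd_app hc2w2 hc2w3) (by simp [rs]) (by simp [rs])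
    · exact del_rs (b := true) (u := u1) (m := w1 ++ i :: w2) (v := w3 ++ v2) hc1
        (by simp [rs]) (by simp [rs])

lemma betaL (b1 b2 : Bool) (u1 w1 m1 v1 m2 v2 : List (Fin n)) (i j : Fin n)
    (hc1 : Cnd b1 i m1) (hc2 : Cnd b2 j m2)
    (heq : m1 ++ i :: v1 = w1 ++ j :: (m2 ++ j :: v2)) :
    DGoal (rs b1 u1 i m1 v1) (rs b2 (u1 ++ i :: w1) j m2 v2) := by
  rcases two_marks heq with ⟨hm, hij, hv⟩ | ⟨w2, hw1, hv1⟩ | ⟨w2, hm1, heq2⟩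
  · subst hm; subst hij; subst hv
    exact beta1 b1 b2 u1 i m1 m2 v2 hc1 hc2
  · -- disjoint case
    subst hw1; subst hv1
    refine Or.inr ⟨rs b2 (rs b1 u1 i m1 w2) j m2 v2, ?_, ?_⟩
    · exact del_rs (b := b2) (u := rs b1 u1 i m1 w2) (m := m2) (v := v2) hc2
        (by rw [rs_append]) rfl
    · refine del_rs (b := b1) (u := u1) (m := m1) (v := w2 ++ rs b2 [] j m2 v2) hc1
        ?_ ?_
      · rw [rs_eq b2]; simp
      · rw [rs_append, rs_eq b2]
  · rcases two_marks heq2 with ⟨hm2, hji, hv⟩ | ⟨w3, hw2, hv2⟩ | ⟨w3, hm2, hv1⟩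
    · subst hm1; subst hm2; subst hji; subst hv
      exact beta3a b1 b2 u1 j w1 m2 v2 hc1 hc2
    · -- nested case
      subst hw2; subst hm1; subst hv2
      have hc1' : Cnd b1 i (w1 ++ rs b2 [] j m2 w3) := by
        intro a ha
        rcases List.mem_append.mp ha with h | h
        · exact hc1 a (by simp [h])
        · rcases mem_rs_nil h with rfl | h | h
          · exact hc1 a (by simp)
          · exact hc1 a (by simp [h])
          · exact hc1 a (by simp [h])
      refine Or.inr ⟨rs b1 u1 i (w1 ++ rs b2 [] j m2 w3) v1, ?_, ?_⟩
      · -- delete the inner redex inside y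
        cases b1 with
        | false =>
          exact del_rs (b := b2) (u := u1 ++ w1) (i := j) (m := m2) (v := w3 ++ i :: v1)
            hc2 (by simp [rs]) (by cases b2 <;> simp [rs])
        | true =>
          exact del_rs (b := b2) (u := u1 ++ i :: w1) (i := j) (m := m2) (v := w3 ++ v1)
            hc2 (by simp [rs]) (by cases b2 <;> simp [rs])
      · refine del_rs (b := b1) (u := u1) (m := w1 ++ rs b2 [] j m2 w3) (v := v1) hc1' ?_ rfl
        cases b1 <;> cases b2 <;> simp [rs]
    · subst hm1; subst hm2; subst hv1
      exact beta3c b1 b2 u1 i j w1 w2 w3 v2 hc1 hc2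

lemma diamond {x y z : List (Fin n)} (h1 : Del x y) (h2 : Del x z) : DGoal y z := by
  rcases del_iff.mp h1 with ⟨b1, u1, i, m1, v1, hc1, rfl, rfl⟩
  rcases del_iff.mp h2 with ⟨b2, u2, j, m2, v2, hc2, e, rfl⟩
  rcases two_marks e with ⟨hu, hij, htl⟩ | ⟨w1, hu2, heq⟩ | ⟨w1, hu1, heq⟩
  · subst hu; subst hij
    rcases two_marks htl with ⟨hm, -, hv⟩ | ⟨w, hm2, hv1⟩ | ⟨w, hm1, hv2⟩
    · subst hm; subst hv
      exact alpha1 b1 b2 u1 m1 v1 i hc1 hc2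
    · subst hm2; subst hv1
      exact alpha2 b1 b2 u1 i m1 w v2 hc1 hc2
    · subst hm1; subst hv2
      exact (alpha2 b2 b1 u1 i m2 w v1 hc2 hc1).symm
  · subst hu2
    exact betaL b1 b2 u1 w1 m1 v1 m2 v2 i j hc1 hc2 heq
  · subst hu1
    exact (betaL b2 b1 u2 w1 m2 v2 m1 v1 j i hc2 hc1 heq).symm

lemma kisStep_del {x y : List (Fin n)} (h : KisStep x y) : Del x y := by
  rcases h with ⟨u, v, i⟩ | ⟨u, v, i, j, hij⟩ | ⟨u, v, i, j, hij⟩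
  · exact del_rs (b := true) (u := u) (i := i) (m := []) (v := v) (by intro a ha; simp at ha)
      (by simp [rs]) (by simp [rs])
  · exact del_rs (b := true) (u := u) (i := i) (m := [j]) (v := v)
      (by intro a ha; simp at ha; simp [ha, hij.le]) (by simp [rs]) (by simp [rs])
  · exact del_rs (b := false) (u := u) (i := j) (m := [i]) (v := v)
      (by intro a ha; simp at ha; simp [ha, hij.le]) (by simp [rs]) (by simp [rs])

lemma canonical_irred {c y : List (Fin n)} (hc : Canonical c) (h : Del c y) : False := by
  rcases h with ⟨u, m, v, i, hm⟩ | ⟨u, m, v, i, hm⟩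
  · obtain ⟨⟨j, hj, hij⟩, -⟩ := hc i m ⟨u, v, by simp⟩
    exact absurd (hm j hj) (not_le.mpr hij)
  · obtain ⟨-, ⟨j, hj, hij⟩⟩ := hc i m ⟨u, v, by simp⟩
    exact absurd (hm j hj) (not_le.mpr hij)

lemma rtg_irred {c y : List (Fin n)} (hc : Canonical c) (h : Relation.ReflTransGen Del c y) :
    c = y := by
  rcases Relation.ReflTransGen.cases_head h with rfl | ⟨z, hz, -⟩
  · rfl
  · exact absurd hz (fun hz => canonical_irred hc hz)

lemma canonical_eq_of_eqvGen {c d : List (Fin n)} (hc : Canonical c) (hd : Canonical d)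
    (h : Relation.EqvGen Del c d) : c = d := by
  have hdia : ∀ a b c' : List (Fin n), Del a b → Del a c' →
      ∃ d', Relation.ReflGen Del b d' ∧ Relation.ReflTransGen Del c' d' := by
    intro a b c' h1 h2
    rcases diamond h1 h2 with rfl | ⟨w, hw1, hw2⟩
    · exact ⟨b, Relation.ReflGen.refl, Relation.ReflTransGen.refl⟩
    · exact ⟨w, Relation.ReflGen.single hw1, Relation.ReflTransGen.single hw2⟩
  have hjoin : Relation.Join (Relation.ReflTransGen Del) c d := by
    have hequiv := Relation.equivalence_join_reflTransGen hdia
    refine (Equivalence.eqvGen_iff hequiv).mp ?_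
    refine Relation.EqvGen.mono ?_ _ _ h
    intro a b hab
    exact ⟨b, Relation.ReflTransGen.single hab, Relation.ReflTransGen.refl⟩
  obtain ⟨w, hcw, hdw⟩ := hjoin
  rw [rtg_irred hc hcw, rtg_irred hd hdw]


lemma filterGE_step {x y : List (Fin n)} (k : Fin n) (h : KisStep x y) :
    KisEquiv (filterGE k x) (filterGE k y) := by
  rcases h with ⟨u, v, i⟩ | ⟨u, v, i, j, hij⟩ | ⟨u, v, i, j, hij⟩
  · by_cases hk : k ≤ i
    · refine Relation.EqvGen.rel _ _ ?_
      have e1 : filterGE k (u ++ [i, i] ++ v) = filterGE k u ++ [i, i] ++ filterGE k v := by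
        simp [filterGE, hk]
      have e2 : filterGE k (u ++ [i] ++ v) = filterGE k u ++ [i] ++ filterGE k v := by
        simp [filterGE, hk]
      rw [e1, e2]
      exact KisStep.idem _ _ i
    · have e : filterGE k (u ++ [i, i] ++ v) = filterGE k (u ++ [i] ++ v) := by
        simp [filterGE, hk]
      rw [e]
      exact Relation.EqvGen.refl _
  · -- left : [i,j,i] → [i,j], i < j
    by_cases hk : k ≤ i
    · have hkj : k ≤ j := hk.trans hij.le
      refine Relation.EqvGen.rel _ _ ?_
      have e1 : filterGE k (u ++ [i, j, i] ++ v) = filterGE k u ++ [i, j, i] ++ filterGE k v := by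
        simp [filterGE, hk, hkj]
      have e2 : filterGE k (u ++ [i, j] ++ v) = filterGE k u ++ [i, j] ++ filterGE k v := by
        simp [filterGE, hk, hkj]
      rw [e1, e2]
      exact KisStep.left _ _ i j hij
    · have e : filterGE k (u ++ [i, j, i] ++ v) = filterGE k (u ++ [i, j] ++ v) := by
        by_cases hkj : k ≤ j <;> simp [filterGE, hk, hkj]
      rw [e]
      exact Relation.EqvGen.refl _
  · -- right : [j,i,j] → [i,j], i < j
    by_cases hk : k ≤ i
    · have hkj : k ≤ j := hk.trans hij.le
      refine Relation.EqvGen.rel _ _ ?_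
      have e1 : filterGE k (u ++ [j, i, j] ++ v) = filterGE k u ++ [j, i, j] ++ filterGE k v := by
        simp [filterGE, hk, hkj]
      have e2 : filterGE k (u ++ [i, j] ++ v) = filterGE k u ++ [i, j] ++ filterGE k v := by
        simp [filterGE, hk, hkj]
      rw [e1, e2]
      exact KisStep.right _ _ i j hij
    · by_cases hkj : k ≤ j
      · have e1 : filterGE k (u ++ [j, i, j] ++ v) = filterGE k u ++ [j, j] ++ filterGE k v := by
          simp [filterGE, hk, hkj]
        have e2 : filterGE k (u ++ [i, j] ++ v) = filterGE k u ++ [j] ++ filterGE k v := by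
          simp [filterGE, hk, hkj]
        rw [e1, e2]
        exact Relation.EqvGen.rel _ _ (KisStep.idem _ _ j)
      · have e : filterGE k (u ++ [j, i, j] ++ v) = filterGE k (u ++ [i, j] ++ v) := by
          simp [filterGE, hk, hkj]
        rw [e]
        exact Relation.EqvGen.refl _

lemma filterGE_equiv {x y : List (Fin n)} (k : Fin n) (h : KisEquiv x y) :
    KisEquiv (filterGE k x) (filterGE k y) := by
  induction h with
  | rel a b hab => exact filterGE_step k hab
  | refl a => exact Relation.EqvGen.refl _
  | symm a b _ ih => exact Relation.EqvGen.symm _ _ ih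
  | trans a b c _ _ ih1 ih2 => exact Relation.EqvGen.trans _ _ _ ih1 ih2

/-- `Can_{{k,…,n}} w = Can_{{k,…,n}} Can w`. -/
theorem stmt_13 {n : ℕ} (w c d e : List (Fin n)) (k : Fin n)
    (hc : Canonical c) (hcw : KisEquiv c w)
    (hd : Canonical d) (hdw : KisEquiv d (filterGE k w))
    (he : Canonical e) (hec : KisEquiv e (filterGE k c)) :
    d = e := by
  have hde : KisEquiv d e := by
    have h1 : KisEquiv (filterGE k c) (filterGE k w) := filterGE_equiv k hcw
    have h2 : KisEquiv d (filterGE k c) :=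
      Relation.EqvGen.trans _ _ _ hdw (Relation.EqvGen.symm _ _ h1)
    exact Relation.EqvGen.trans _ _ _ h2 (Relation.EqvGen.symm _ _ hec)
  exact canonical_eq_of_eqvGen hd he (Relation.EqvGen.mono (fun a b => kisStep_del) _ _ hde)
end

section
/- Let w be a word over Fin n and k a letter. If c is canonical with c ~ w and d is canonical with d ~ filter≥k w, then d is a sublist (quasi-subword) of c. (In the paper's notation: Can_{{k,…,n}} w is a quasi-subword of Can w.) -/
variable {n : ℕ}

section Aux

/-- cons-normal forms of the generators -/
lemma kis_idem' (α δ : List (Fin n)) (i : Fin n) :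
    KisStep (α ++ i :: i :: δ) (α ++ i :: δ) := by
  simpa using KisStep.idem α δ i

lemma kis_left' (α δ : List (Fin n)) {i j : Fin n} (h : i < j) :
    KisStep (α ++ i :: j :: i :: δ) (α ++ i :: j :: δ) := by
  simpa using KisStep.left α δ i j h

lemma kis_right' (α δ : List (Fin n)) {i j : Fin n} (h : i < j) :
    KisStep (α ++ j :: i :: j :: δ) (α ++ i :: j :: δ) := by
  simpa using KisStep.right α δ i j h

lemma KisEquiv.rel {a b : List (Fin n)} (h : KisStep a b) : KisEquiv a b :=
  Relation.EqvGen.rel _ _ h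

lemma KisEquiv.refl (a : List (Fin n)) : KisEquiv a a := Relation.EqvGen.refl a

lemma KisEquiv.symm {a b : List (Fin n)} (h : KisEquiv a b) : KisEquiv b a :=
  Relation.EqvGen.symm _ _ h

lemma KisEquiv.trans {a b c : List (Fin n)} (h : KisEquiv a b) (h' : KisEquiv b c) :
    KisEquiv a c := Relation.EqvGen.trans _ _ _ h h'

/-- delete a repeated letter over a block of larger letters -/
lemma equiv_delR {u : List (Fin n)} {i : Fin n} (hu : ∀ x ∈ u, i < x) :
    ∀ (α δ : List (Fin n)), KisEquiv (α ++ i :: (u ++ i :: δ)) (α ++ i :: (u ++ δ)) := by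
  induction u with
  | nil => intro α δ; exact KisEquiv.rel (kis_idem' α δ i)
  | cons j t ih =>
    intro α δ
    have hj : i < j := hu j (by simp)
    have ht : ∀ x ∈ t, i < x := fun x hx => hu x (by simp [hx])
    have s1 : KisStep (α ++ i :: j :: i :: (t ++ i :: δ)) (α ++ i :: j :: (t ++ i :: δ)) :=
      kis_left' α (t ++ i :: δ) hj
    have s2 : KisStep (α ++ i :: j :: i :: (t ++ δ)) (α ++ i :: j :: (t ++ δ)) :=
      kis_left' α (t ++ δ) hj
    have e1 : KisEquiv ((α ++ [i, j]) ++ i :: (t ++ i :: δ)) ((α ++ [i, j]) ++ i :: (t ++ δ)) :=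
      ih ht (α ++ [i, j]) δ
    have e1' : KisEquiv (α ++ i :: j :: i :: (t ++ i :: δ)) (α ++ i :: j :: i :: (t ++ δ)) := by
      simpa using e1
    exact (((KisEquiv.rel s1).symm).trans e1').trans (KisEquiv.rel s2)

end Aux

section Aux2
lemma equiv_delL {i : Fin n} :
    ∀ (u : List (Fin n)), (∀ x ∈ u, x < i) → ∀ (α δ : List (Fin n)),
      KisEquiv (α ++ i :: (u ++ i :: δ)) (α ++ (u ++ i :: δ)) := by
  intro u
  induction u using List.reverseRecOn with
  | nil => intro _ α δ; exact KisEquiv.rel (kis_idem' α δ i)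
  | append_singleton t j ih =>
    intro hu α δ
    have hj : j < i := hu j (by simp)
    have ht : ∀ x ∈ t, x < i := fun x hx => hu x (by simp [hx])
    have s1 : KisEquiv (α ++ i :: (t ++ [j]) ++ i :: δ) ((α ++ i :: t) ++ i :: j :: i :: δ) := by
      have := (KisEquiv.rel (kis_right' (α ++ i :: t) δ hj)).symm
      simpa using this
    have e1 : KisEquiv ((α ++ i :: t) ++ i :: j :: i :: δ) ((α ++ t) ++ i :: j :: i :: δ) := by
      have := ih ht α (j :: i :: δ)
      simpa using this
    have s2 : KisEquiv ((α ++ t) ++ i :: j :: i :: δ) (α ++ (t ++ [j]) ++ i :: δ) := by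
      have := KisEquiv.rel (kis_right' (α ++ t) δ hj)
      simpa using this
    have goal' := (s1.trans e1).trans s2
    simpa using goal'
end Aux2

section Rewrite

/-- `γ` ends with an `i` followed by strictly bigger letters. -/
def DelL (i : Fin n) (γ : List (Fin n)) : Prop :=
  ∃ α u, γ = α ++ i :: u ∧ ∀ x ∈ u, i < x

/-- `δ` starts with strictly smaller letters followed by an `i`. -/
def DelR (i : Fin n) (δ : List (Fin n)) : Prop :=
  ∃ u β, δ = u ++ i :: β ∧ ∀ x ∈ u, x < i

/-- One-step deletion. -/
def Del_s14 (a b : List (Fin n)) : Prop :=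
  ∃ (γ : List (Fin n)) (i : Fin n) (δ : List (Fin n)), a = γ ++ i :: δ ∧ b = γ ++ δ ∧ (DelL i γ ∨ DelR i δ)

lemma kisStep_del_s14 {a b : List (Fin n)} (h : KisStep a b) : Del_s14 a b := by
  cases h with
  | idem u v i =>
    exact ⟨u ++ [i], i, v, by simp, by simp, Or.inl ⟨u, [], by simp, by simp⟩⟩
  | left u v i j hij =>
    exact ⟨u ++ [i, j], i, v, by simp, by simp,
      Or.inl ⟨u, [j], by simp, by simpa using hij⟩⟩
  | right u v i j hij =>
    exact ⟨u, j, i :: j :: v, by simp, by simp,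
      Or.inr ⟨[i], v, by simp, by simpa using hij⟩⟩

lemma del_equiv {a b : List (Fin n)} (h : Del_s14 a b) : KisEquiv a b := by
  obtain ⟨γ, i, δ, ha, hb, hj⟩ := h
  subst ha; subst hb
  rcases hj with ⟨α, u, rfl, hu⟩ | ⟨u, β, rfl, hu⟩
  · have := equiv_delR hu α δ
    simpa using this
  · have := equiv_delL (i := i) u hu γ β
    simpa using this

lemma del_sublist {a b : List (Fin n)} (h : Del_s14 a b) : b.Sublist a := by
  obtain ⟨γ, i, δ, rfl, rfl, -⟩ := h
  exact (List.sublist_cons_self i δ).append_left γ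

lemma del_length {a b : List (Fin n)} (h : Del_s14 a b) : b.length + 1 = a.length := by
  obtain ⟨γ, i, δ, rfl, rfl, -⟩ := h
  simp [Nat.add_assoc, Nat.add_comm 1]

/-- a canonical word admits no deletion step -/
lemma canonical_no_del {a b : List (Fin n)} (hc : Canonical a) (h : Del_s14 a b) : False := by
  obtain ⟨γ, i, δ, rfl, -, hj⟩ := h
  rcases hj with ⟨α, u, rfl, hu⟩ | ⟨u, β, rfl, hu⟩
  · have hinf : ([i] ++ u ++ [i]) <:+: ((α ++ i :: u) ++ i :: δ) :=
      ⟨α, δ, by simp⟩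
    obtain ⟨-, x, hx, hxi⟩ := hc i u hinf
    exact absurd (hu x hx) (not_lt.2 hxi.le)
  · have hinf : ([i] ++ u ++ [i]) <:+: (γ ++ i :: (u ++ i :: β)) :=
      ⟨γ, β, by simp⟩
    obtain ⟨⟨x, hx, hxi⟩, -⟩ := hc i u hinf
    exact absurd (hu x hx) (not_lt.2 hxi.le)

end Rewrite

section NF

lemma non_canonical_del {a : List (Fin n)} (h : ¬ Canonical a) : ∃ b, Del_s14 a b := by
  have hex : ∃ m, ∃ (i : Fin n) (u : List (Fin n)),
      u.length = m ∧ ([i] ++ u ++ [i]) <:+: a ∧ ¬ Special i u := by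
    simp only [Canonical, not_forall] at h
    obtain ⟨i, u, hinf, hns⟩ := h
    exact ⟨u.length, i, u, rfl, hinf, hns⟩
  classical
  obtain ⟨i, u, hlen, hinf, hns⟩ := Nat.find_spec hex
  have hmin : ∀ (i' : Fin n) (u' : List (Fin n)),
      u'.length < u.length → ([i'] ++ u' ++ [i']) <:+: a → Special i' u' := by
    intro i' u' hl hinf'
    by_contra hns'
    exact absurd (Nat.find_min hex (by omega : u'.length < Nat.find hex))
      (by exact fun hc => hc ⟨i', u', rfl, hinf', hns'⟩)
  have hiu : i ∉ u := by
    intro hmem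
    obtain ⟨u₁, u₂, rfl⟩ := List.append_of_mem hmem
    have hinf₁ : ([i] ++ u₁ ++ [i]) <:+: a := by
      refine List.IsInfix.trans ⟨[], u₂ ++ [i], by simp⟩ hinf
    have hsp := hmin i u₁ (by simp) hinf₁
    rcases not_and_or.1 hns with hn | hn
    · obtain ⟨x, hx, hxi⟩ := hsp.1
      exact hn ⟨x, by simp [hx], hxi⟩
    · obtain ⟨x, hx, hxi⟩ := hsp.2
      exact hn ⟨x, by simp [hx], hxi⟩
  obtain ⟨s, t, hst⟩ := hinf
  rcases not_and_or.1 hns with hn | hn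
  · -- no bigger letter: all letters of u are < i, delete left copy
    have hu : ∀ x ∈ u, x < i := by
      intro x hx
      rcases lt_trichotomy x i with h' | h' | h'
      · exact h'
      · exact absurd (h' ▸ hx) hiu
      · exact absurd ⟨x, hx, h'⟩ hn
    exact ⟨s ++ (u ++ i :: t), s, i, u ++ i :: t,
      by rw [← hst]; simp, rfl, Or.inr ⟨u, t, rfl, hu⟩⟩
  · -- no smaller letter: all letters of u are > i, delete right copy
    have hu : ∀ x ∈ u, i < x := by
      intro x hx
      rcases lt_trichotomy x i with h' | h' | h'
      · exact absurd ⟨x, hx, h'⟩ hn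
      · exact absurd (h' ▸ hx) hiu
      · exact h'
    exact ⟨(s ++ i :: u) ++ t, s ++ i :: u, i, t,
      by rw [← hst]; simp, rfl, Or.inl ⟨s, u, rfl, hu⟩⟩

lemma nf_exists_aux : ∀ (N : ℕ) (a : List (Fin n)), a.length ≤ N →
    ∃ c, Canonical c ∧ Relation.ReflTransGen Del_s14 a c := by
  intro N
  induction N with
  | zero =>
    intro a ha
    by_cases hc : Canonical a
    · exact ⟨a, hc, Relation.ReflTransGen.refl⟩
    · obtain ⟨b, hb⟩ := non_canonical_del hc
      have := del_length hb
      omega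
  | succ N ih =>
    intro a ha
    by_cases hc : Canonical a
    · exact ⟨a, hc, Relation.ReflTransGen.refl⟩
    · obtain ⟨b, hb⟩ := non_canonical_del hc
      have hl := del_length hb
      obtain ⟨c, hcc, hrc⟩ := ih b (by omega)
      exact ⟨c, hcc, Relation.ReflTransGen.head hb hrc⟩

/-- every word reduces to a canonical word -/
lemma nf_exists (a : List (Fin n)) :
    ∃ c, Canonical c ∧ Relation.ReflTransGen Del_s14 a c :=
  nf_exists_aux a.length a le_rfl

end NF

section Confluence

lemma three_way {α : Type*} {x y p q : List α} {a b : α} (h : x ++ a :: y = p ++ b :: q) :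
    (∃ ν, p = x ++ a :: ν ∧ y = ν ++ b :: q) ∨ (x = p ∧ a = b ∧ y = q) ∨
    (∃ ν, x = p ++ b :: ν ∧ q = ν ++ a :: y) := by
  rcases List.append_eq_append_iff.1 h with ⟨a', ha1, ha2⟩ | ⟨c', hc1, hc2⟩
  · cases a' with
    | nil =>
      simp only [List.append_nil] at ha1
      simp only [List.nil_append, List.cons.injEq] at ha2
      exact Or.inr (Or.inl ⟨ha1.symm ▸ rfl, ha2.1, ha2.2⟩)
    | cons h' t =>
      simp only [List.cons_append, List.cons.injEq] at ha2
      exact Or.inl ⟨t, by rw [ha1, ha2.1], ha2.2⟩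
  · cases c' with
    | nil =>
      simp only [List.append_nil] at hc1
      simp only [List.nil_append, List.cons.injEq] at hc2
      exact Or.inr (Or.inl ⟨hc1, hc2.1.symm, hc2.2.symm⟩)
    | cons h' t =>
      simp only [List.cons_append, List.cons.injEq] at hc2
      exact Or.inr (Or.inr ⟨t, by rw [hc1, hc2.1], hc2.2⟩)

lemma conf_justB {γ₁ μ δ₂ : List (Fin n)} {i₁ i₂ : Fin n}
    (J₁ : DelL i₁ γ₁ ∨ DelR i₁ (μ ++ i₂ :: δ₂))
    (J₂ : DelL i₂ (γ₁ ++ i₁ :: μ) ∨ DelR i₂ δ₂) :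
    (μ = [] ∧ i₁ = i₂) ∨ (DelL i₂ (γ₁ ++ μ) ∨ DelR i₂ δ₂) := by
  rcases J₂ with ⟨α, u, heq, hu⟩ | hr
  · rcases three_way heq with ⟨ν, hα, hμ⟩ | ⟨hγ, hi, hμ⟩ | ⟨ν, hγ, hu'⟩
    · refine Or.inr (Or.inl ⟨γ₁ ++ ν, u, ?_, hu⟩)
      rw [hμ]; simp
    · -- the anchor of the second deletion is the letter removed by the first: i₁ = i₂, μ = u
      rcases J₁ with ⟨α₃, u₃, hγ₁, hu₃⟩ | ⟨u₄, β₄, heq₄, hu₄⟩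
      · refine Or.inr (Or.inl ⟨α₃, u₃ ++ μ, ?_, ?_⟩)
        · rw [hγ₁, hi]; simp
        · intro x hx
          rcases List.mem_append.1 hx with hx | hx
          · exact hi ▸ hu₃ x hx
          · exact hu x (hμ ▸ hx)
      · rcases three_way heq₄ with ⟨ν, hν, -⟩ | ⟨hμ', -, -⟩ | ⟨ν, hμ', -⟩
        · have : i₂ < i₁ := hu₄ i₂ (by rw [hν]; simp)
          rw [hi] at this
          exact absurd this (lt_irrefl _)
        · left
          refine ⟨?_, hi⟩
          cases hμt : μ with
          | nil => rfl
          | cons h t =>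
            have h1 : h < i₁ := hu₄ h (by rw [← hμ', hμt]; simp)
            have h2 : i₂ < h := hu h (by rw [← hμ, hμt]; simp)
            rw [hi] at h1
            exact absurd h1 (not_lt.2 h2.le)
        · have : i₂ < i₁ := hu i₁ (by rw [← hμ, hμ']; simp)
          rw [hi] at this
          exact absurd this (lt_irrefl _)
    · refine Or.inr (Or.inl ⟨α, ν ++ μ, ?_, ?_⟩)
      · rw [hγ]; simp
      · intro x hx
        rcases List.mem_append.1 hx with hx | hx
        · exact hu x (by rw [hu']; simp [hx])
        · exact hu x (by rw [hu']; simp [hx])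
  · exact Or.inr (Or.inr hr)

lemma conf_justC {γ₁ μ δ₂ : List (Fin n)} {i₁ i₂ : Fin n}
    (J₁ : DelL i₁ γ₁ ∨ DelR i₁ (μ ++ i₂ :: δ₂))
    (J₂ : DelL i₂ (γ₁ ++ i₁ :: μ) ∨ DelR i₂ δ₂) :
    (μ = [] ∧ i₁ = i₂) ∨ (DelL i₁ γ₁ ∨ DelR i₁ (μ ++ δ₂)) := by
  rcases J₁ with hl | ⟨u₄, β₄, heq₄, hu₄⟩
  · exact Or.inr (Or.inl hl)
  · rcases three_way heq₄ with ⟨ν, hu₄', hδ₂⟩ | ⟨hμ, hi, hδ₂⟩ | ⟨ν, hμ, -⟩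
    · refine Or.inr (Or.inr ⟨μ ++ ν, β₄, ?_, ?_⟩)
      · rw [hδ₂]; simp
      · intro x hx
        rcases List.mem_append.1 hx with hx | hx
        · exact hu₄ x (by rw [hu₄']; simp [hx])
        · exact hu₄ x (by rw [hu₄']; simp [hx])
    · -- μ = u₄ all < i₁, i₂ = i₁
      rcases J₂ with ⟨α, u, heq, hu⟩ | ⟨u₆, β₆, hδ, hu₆⟩
      · rcases three_way heq with ⟨ν, -, hμ'⟩ | ⟨-, hi', hμ'⟩ | ⟨ν, -, hu'⟩
        · have : i₂ < i₁ := hu₄ i₂ (by rw [← hμ, hμ']; simp)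
          rw [hi] at this
          exact absurd this (lt_irrefl _)
        · left
          refine ⟨?_, hi'⟩
          cases hμt : μ with
          | nil => rfl
          | cons h t =>
            have h1 : h < i₁ := hu₄ h (by rw [← hμ, hμt]; simp)
            have h2 : i₂ < h := hu h (by rw [← hμ', hμt]; simp)
            rw [hi] at h2
            exact absurd h1 (not_lt.2 h2.le)
        · have : i₂ < i₁ := hu i₁ (by rw [hu']; simp)
          rw [hi] at this
          exact absurd this (lt_irrefl _)
      · refine Or.inr (Or.inr ⟨μ ++ u₆, β₆, ?_, ?_⟩)
        · rw [hδ, hi]; simp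
        · intro x hx
          rcases List.mem_append.1 hx with hx | hx
          · exact hu₄ x (by rw [← hμ]; exact hx)
          · exact hi ▸ hu₆ x hx
    · exact Or.inr (Or.inr ⟨u₄, ν ++ δ₂, by rw [hμ]; simp, hu₄⟩)

end Confluence

section Newman

lemma conf_main {γ₁ μ δ₂ : List (Fin n)} {i₁ i₂ : Fin n}
    (J₁ : DelL i₁ γ₁ ∨ DelR i₁ (μ ++ i₂ :: δ₂))
    (J₂ : DelL i₂ (γ₁ ++ i₁ :: μ) ∨ DelR i₂ δ₂) :
    ∃ d, Relation.ReflTransGen Del_s14 (γ₁ ++ (μ ++ i₂ :: δ₂)) d ∧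
         Relation.ReflTransGen Del_s14 ((γ₁ ++ i₁ :: μ) ++ δ₂) d := by
  rcases conf_justB J₁ J₂ with ⟨hμ, hi⟩ | jB
  · subst hμ; subst hi
    exact ⟨γ₁ ++ i₁ :: δ₂, by simp [Relation.ReflTransGen.refl],
      by simpa using Relation.ReflTransGen.refl⟩
  · rcases conf_justC J₁ J₂ with ⟨hμ, hi⟩ | jC
    · subst hμ; subst hi
      exact ⟨γ₁ ++ i₁ :: δ₂, by simp [Relation.ReflTransGen.refl],
        by simpa using Relation.ReflTransGen.refl⟩
    · refine ⟨γ₁ ++ (μ ++ δ₂), Relation.ReflTransGen.single ?_,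
        Relation.ReflTransGen.single ?_⟩
      · exact ⟨γ₁ ++ μ, i₂, δ₂, by simp, by simp, jB⟩
      · exact ⟨γ₁, i₁, μ ++ δ₂, by simp, by simp, jC⟩

lemma del_locally_confluent {a b c : List (Fin n)} (h₁ : Del_s14 a b) (h₂ : Del_s14 a c) :
    ∃ d, Relation.ReflTransGen Del_s14 b d ∧ Relation.ReflTransGen Del_s14 c d := by
  obtain ⟨γ₁, i₁, δ₁, ha₁, hb, J₁⟩ := h₁
  obtain ⟨γ₂, i₂, δ₂, ha₂, hc, J₂⟩ := h₂
  rw [ha₁] at ha₂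
  rcases three_way ha₂ with ⟨μ, hγ₂, hδ₁⟩ | ⟨hγ, hi, hδ⟩ | ⟨μ, hγ₁, hδ₂⟩
  · subst hδ₁; subst hγ₂
    obtain ⟨d, hd₁, hd₂⟩ := conf_main J₁ J₂
    exact ⟨d, by rw [hb]; simpa using hd₁, by rw [hc]; exact hd₂⟩
  · subst hγ; subst hi; subst hδ
    exact ⟨b, Relation.ReflTransGen.refl, by rw [hb, hc]⟩
  · subst hδ₂; subst hγ₁
    obtain ⟨d, hd₂, hd₁⟩ := conf_main J₂ J₁
    exact ⟨d, by rw [hb]; exact hd₁, by rw [hc]; simpa using hd₂⟩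

lemma nf_unique_aux : ∀ (N : ℕ) (a : List (Fin n)), a.length ≤ N →
    ∀ c₁ c₂, Canonical c₁ → Relation.ReflTransGen Del_s14 a c₁ →
      Canonical c₂ → Relation.ReflTransGen Del_s14 a c₂ → c₁ = c₂ := by
  intro N
  induction N with
  | zero =>
    intro a ha c₁ c₂ h1 r1 h2 r2
    rcases (Relation.ReflTransGen.cases_head r1) with rfl | ⟨b₁, hab₁, -⟩
    · rcases (Relation.ReflTransGen.cases_head r2) with rfl | ⟨b₂, hab₂, -⟩
      · rfl
      · exact absurd (canonical_no_del h1 hab₂) (by simp)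
    · have := del_length hab₁; omega
  | succ N ih =>
    intro a ha c₁ c₂ h1 r1 h2 r2
    rcases (Relation.ReflTransGen.cases_head r1) with rfl | ⟨b₁, hab₁, hb₁⟩
    · rcases (Relation.ReflTransGen.cases_head r2) with rfl | ⟨b₂, hab₂, -⟩
      · rfl
      · exact absurd (canonical_no_del h1 hab₂) (by simp)
    · rcases (Relation.ReflTransGen.cases_head r2) with rfl | ⟨b₂, hab₂, hb₂⟩
      · exact absurd (canonical_no_del h2 hab₁) (by simp)
      · obtain ⟨d, hd₁, hd₂⟩ := del_locally_confluent hab₁ hab₂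
        obtain ⟨e, he, hde⟩ := nf_exists d
        have l₁ := del_length hab₁
        have l₂ := del_length hab₂
        have e₁ : c₁ = e := ih b₁ (by omega) c₁ e h1 hb₁ he (hd₁.trans hde)
        have e₂ : c₂ = e := ih b₂ (by omega) c₂ e h2 hb₂ he (hd₂.trans hde)
        rw [e₁, e₂]

lemma nf_unique {a c₁ c₂ : List (Fin n)} (h1 : Canonical c₁)
    (r1 : Relation.ReflTransGen Del_s14 a c₁) (h2 : Canonical c₂)
    (r2 : Relation.ReflTransGen Del_s14 a c₂) : c₁ = c₂ :=
  nf_unique_aux a.length a le_rfl c₁ c₂ h1 r1 h2 r2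

lemma kisEquiv_nf {x y : List (Fin n)} (h : KisEquiv x y) :
    ∀ c₁ c₂, Canonical c₁ → Relation.ReflTransGen Del_s14 x c₁ →
      Canonical c₂ → Relation.ReflTransGen Del_s14 y c₂ → c₁ = c₂ := by
  induction h with
  | rel u v huv =>
    intro c₁ c₂ h1 r1 h2 r2
    exact nf_unique h1 r1 h2 (Relation.ReflTransGen.head (kisStep_del_s14 huv) r2)
  | refl u =>
    intro c₁ c₂ h1 r1 h2 r2
    exact nf_unique h1 r1 h2 r2
  | symm u v _ ih =>
    intro c₁ c₂ h1 r1 h2 r2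
    exact (ih c₂ c₁ h2 r2 h1 r1).symm
  | trans u v w _ _ ih₁ ih₂ =>
    intro c₁ c₂ h1 r1 h2 r2
    obtain ⟨e, he, hve⟩ := nf_exists v
    exact (ih₁ c₁ e h1 r1 he hve).trans (ih₂ e c₂ he hve h2 r2)

/-- equivalent canonical words are equal -/
lemma canonical_unique {x y : List (Fin n)} (h : KisEquiv x y)
    (hx : Canonical x) (hy : Canonical y) : x = y :=
  kisEquiv_nf h x y hx Relation.ReflTransGen.refl hy Relation.ReflTransGen.refl

end Newman

section Filter

lemma rtg_equiv {a b : List (Fin n)} (h : Relation.ReflTransGen Del_s14 a b) : KisEquiv a b := by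
  induction h with
  | refl => exact KisEquiv.refl _
  | tail _ hbc ih => exact ih.trans (del_equiv hbc)

lemma rtg_sublist {a b : List (Fin n)} (h : Relation.ReflTransGen Del_s14 a b) : b.Sublist a := by
  induction h with
  | refl => exact List.Sublist.refl _
  | tail _ hbc ih => exact (del_sublist hbc).trans ih

lemma filter_congr_step {a b : List (Fin n)} {k : Fin n} (h : KisStep a b) :
    KisEquiv (filterGE k a) (filterGE k b) := by
  cases h with
  | idem u v i =>
    by_cases hk : k ≤ i
    · have e1 : filterGE k (u ++ [i, i] ++ v) = filterGE k u ++ [i, i] ++ filterGE k v := by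
        simp [filterGE, hk]
      have e2 : filterGE k (u ++ [i] ++ v) = filterGE k u ++ [i] ++ filterGE k v := by
        simp [filterGE, hk]
      rw [e1, e2]
      exact KisEquiv.rel (KisStep.idem _ _ i)
    · have e1 : filterGE k (u ++ [i, i] ++ v) = filterGE k u ++ filterGE k v := by
        simp [filterGE, hk]
      have e2 : filterGE k (u ++ [i] ++ v) = filterGE k u ++ filterGE k v := by
        simp [filterGE, hk]
      rw [e1, e2]
      exact KisEquiv.refl _
  | left u v i j hij =>
    by_cases hki : k ≤ i
    · have hkj : k ≤ j := hki.trans hij.le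
      have e1 : filterGE k (u ++ [i, j, i] ++ v) = filterGE k u ++ [i, j, i] ++ filterGE k v := by
        simp [filterGE, hki, hkj]
      have e2 : filterGE k (u ++ [i, j] ++ v) = filterGE k u ++ [i, j] ++ filterGE k v := by
        simp [filterGE, hki, hkj]
      rw [e1, e2]
      exact KisEquiv.rel (KisStep.left _ _ i j hij)
    · by_cases hkj : k ≤ j
      · have e1 : filterGE k (u ++ [i, j, i] ++ v) = filterGE k u ++ [j] ++ filterGE k v := by
          simp [filterGE, hki, hkj]
        have e2 : filterGE k (u ++ [i, j] ++ v) = filterGE k u ++ [j] ++ filterGE k v := by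
          simp [filterGE, hki, hkj]
        rw [e1, e2]
        exact KisEquiv.refl _
      · have e1 : filterGE k (u ++ [i, j, i] ++ v) = filterGE k u ++ filterGE k v := by
          simp [filterGE, hki, hkj]
        have e2 : filterGE k (u ++ [i, j] ++ v) = filterGE k u ++ filterGE k v := by
          simp [filterGE, hki, hkj]
        rw [e1, e2]
        exact KisEquiv.refl _
  | right u v i j hij =>
    by_cases hki : k ≤ i
    · have hkj : k ≤ j := hki.trans hij.le
      have e1 : filterGE k (u ++ [j, i, j] ++ v) = filterGE k u ++ [j, i, j] ++ filterGE k v := by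
        simp [filterGE, hki, hkj]
      have e2 : filterGE k (u ++ [i, j] ++ v) = filterGE k u ++ [i, j] ++ filterGE k v := by
        simp [filterGE, hki, hkj]
      rw [e1, e2]
      exact KisEquiv.rel (KisStep.right _ _ i j hij)
    · by_cases hkj : k ≤ j
      · have e1 : filterGE k (u ++ [j, i, j] ++ v) = filterGE k u ++ [j, j] ++ filterGE k v := by
          simp [filterGE, hki, hkj]
        have e2 : filterGE k (u ++ [i, j] ++ v) = filterGE k u ++ [j] ++ filterGE k v := by
          simp [filterGE, hki, hkj]
        rw [e1, e2]
        exact KisEquiv.rel (KisStep.idem _ _ j)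
      · have e1 : filterGE k (u ++ [j, i, j] ++ v) = filterGE k u ++ filterGE k v := by
          simp [filterGE, hki, hkj]
        have e2 : filterGE k (u ++ [i, j] ++ v) = filterGE k u ++ filterGE k v := by
          simp [filterGE, hki, hkj]
        rw [e1, e2]
        exact KisEquiv.refl _

lemma filter_congr {a b : List (Fin n)} {k : Fin n} (h : KisEquiv a b) :
    KisEquiv (filterGE k a) (filterGE k b) := by
  induction h with
  | rel u v huv => exact filter_congr_step huv
  | refl u => exact KisEquiv.refl _
  | symm u v _ ih => exact ih.symm
  | trans u v w _ _ ih₁ ih₂ => exact ih₁.trans ih₂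

end Filter


/-- `Can_{{k,…,n}} w` is a quasi-subword (sublist) of `Can w`. -/
theorem stmt_14 {n : ℕ} (w c d : List (Fin n)) (k : Fin n)
    (hc : Canonical c) (hcw : KisEquiv c w)
    (hd : Canonical d) (hdw : KisEquiv d (filterGE k w)) :
    d.Sublist c := by
  have h1 : KisEquiv (filterGE k c) (filterGE k w) := filter_congr hcw
  obtain ⟨e, he, hre⟩ := nf_exists (filterGE k c)
  have hde : KisEquiv d e := (hdw.trans h1.symm).trans (rtg_equiv hre)
  have hdeq : d = e := canonical_unique hde hd he
  rw [hdeq]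
  exact (rtg_sublist hre).trans List.filter_sublist
end

section
/- Let w be a word over Fin n, let c be canonical with c ~ w, and set q_m = (F_w ⋆) m for m : Fin n. Then for every k with 1 ≤ k ≤ n, the nested join join q_{k-1} (join q_{k-2} (⋯ (join q_1 q_0) ⋯)) equals the longest suffix of c whose first letter is strictly less than k, or [] if no letter strictly less than k occurs in c. (In the paper's 1-indexed notation: [p_k,[…,[p_2,p_1]…]] = T_{{1,…,k}} Can w.) -/
variable {n : ℕ}

/-! ### Layer 1: basic lemmas about `join` and folds -/

theorem join_of_sublist {u v : List (Fin n)} (h : u.Sublist v) : join u v = v := by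
  cases u with
  | nil => rfl
  | cons a t => simp [join, h]

theorem join_cons_of_not {a : Fin n} {t v : List (Fin n)} (h : ¬ (a :: t).Sublist v) :
    join (a :: t) v = a :: join t v := by
  simp [join, h]

theorem join_nil (u : List (Fin n)) : join u [] = u := by
  induction u with
  | nil => rfl
  | cons a t ih =>
      rw [join_cons_of_not (by simp), ih]

theorem sublist_join_left (u v : List (Fin n)) : u.Sublist (join u v) := by
  induction u with
  | nil => exact List.nil_sublist _
  | cons a t ih =>
      by_cases h : (a :: t).Sublist v
      · rw [join_of_sublist h]; exact h
      · rw [join_cons_of_not h]; exact List.cons_sublist_cons.2 ih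

theorem suffix_join (u v : List (Fin n)) : v.IsSuffix (join u v) := by
  induction u with
  | nil => exact List.suffix_refl v
  | cons a t ih =>
      by_cases h : (a :: t).Sublist v
      · rw [join_of_sublist h]
      · rw [join_cons_of_not h]
        exact ih.trans (List.suffix_cons a _)

theorem sublist_join_right (u v : List (Fin n)) : v.Sublist (join u v) :=
  (suffix_join u v).sublist

/-- Key computation rule for `join` on an append, when we know exactly where it stops. -/
theorem join_append_eq {α β v : List (Fin n)}
    (hstop : ∀ α₁ (x : Fin n) α₂, α = α₁ ++ x :: α₂ → ¬ ((x :: (α₂ ++ β)).Sublist v))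
    (hβ : β.Sublist v) : join (α ++ β) v = α ++ v := by
  induction α with
  | nil => simpa using join_of_sublist hβ
  | cons x α' ih =>
      have h1 : ¬ ((x :: (α' ++ β)).Sublist v) := hstop [] x α' rfl
      have ih' := ih (fun α₁ y α₂ hsplit => hstop (x :: α₁) y α₂ (by rw [hsplit]; rfl))
      rw [List.cons_append, join_cons_of_not h1, ih']
      rfl

theorem mem_sublist_foldr {x : List (Fin n)} {l : List (List (Fin n))} (h : x ∈ l) :
    x.Sublist (List.foldr join [] l) := by
  induction l with
  | nil => simp at h
  | cons y l' ih =>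
      rcases List.mem_cons.1 h with h | h
      · subst h; exact sublist_join_left _ _
      · exact ((ih h).trans (sublist_join_right _ _))

theorem foldr_collapse {A : List (List (Fin n))} {B : List (Fin n)}
    (h : ∀ x ∈ A, x.Sublist B) : List.foldr join B A = B := by
  induction A with
  | nil => rfl
  | cons y A' ih =>
      have hA' : List.foldr join B A' = B := ih (fun x hx => h x (by simp [hx]))
      simp only [List.foldr_cons, hA']
      exact join_of_sublist (h y (by simp))

/-! ### Layer 2: definitions of `truncIn`, `g`, and the canonicalizing machine -/

/-- Longest suffix whose head lies in `[m, k)`, or `[]`. -/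
def truncIn (m k : ℕ) : List (Fin n) → List (Fin n)
  | [] => []
  | a :: t => if m ≤ (a : ℕ) ∧ (a : ℕ) < k then a :: t else truncIn m k t

/-- The recursive description of the nested joins of the states. -/
def g (m k : ℕ) : List (Fin n) → List (Fin n)
  | [] => []
  | a :: t => if m ≤ (a : ℕ) ∧ (a : ℕ) < k then
      join (a :: g ((a : ℕ) + 1) n t) (g m (a : ℕ) t) else g m k t

/-- Update of the armed set after keeping letter `x`. -/
def upd (S : Fin n → Bool) (x : Fin n) : Fin n → Bool :=
  fun y => if y < x then S y else decide (y = x)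

/-- The one-pass canonicalizing machine with threshold `m` and armed set `S`. -/
def machineL (m : ℕ) (S : Fin n → Bool) : List (Fin n) → List (Fin n)
  | [] => []
  | x :: r => if (x : ℕ) < m then machineL m S r
      else if S x then machineL m S r
      else x :: machineL m (upd S x) r

/-- The armed set after running the machine over a word. -/
def evolve (m : ℕ) (S : Fin n → Bool) : List (Fin n) → (Fin n → Bool)
  | [] => S
  | x :: r => if (x : ℕ) < m then evolve m S r
      else if S x then evolve m S r
      else evolve m (upd S x) r

theorem truncIn_zero (k : ℕ) (w : List (Fin n)) : truncIn 0 k w = truncLtN k w := by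
  induction w with
  | nil => rfl
  | cons a t ih => simp only [truncIn, truncLtN, Nat.zero_le, true_and, ih]

theorem truncIn_suffix (m k : ℕ) (w : List (Fin n)) : (truncIn m k w).IsSuffix w := by
  induction w with
  | nil => exact List.suffix_refl _
  | cons a t ih =>
      by_cases h : m ≤ (a : ℕ) ∧ (a : ℕ) < k
      · simp [truncIn, h]
      · simp only [truncIn, if_neg h]
        exact ih.trans (List.suffix_cons a t)

/-- Decomposition of a word at its `truncIn` point. -/
theorem truncIn_decomp (m k : ℕ) (w : List (Fin n)) :
    ∃ R, w = R ++ truncIn m k w ∧ ∀ x ∈ R, ¬ (m ≤ (x : ℕ) ∧ (x : ℕ) < k) := by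
  induction w with
  | nil => exact ⟨[], rfl, by simp⟩
  | cons a t ih =>
      by_cases h : m ≤ (a : ℕ) ∧ (a : ℕ) < k
      · exact ⟨[], by simp [truncIn, h], by simp⟩
      · obtain ⟨R, hR, hmem⟩ := ih
        refine ⟨a :: R, ?_, ?_⟩
        · simp only [truncIn, if_neg h, List.cons_append]; rw [← hR]
        · intro x hx
          rcases List.mem_cons.1 hx with hx | hx
          · subst hx; exact h
          · exact hmem x hx

theorem truncIn_head {m k : ℕ} {w : List (Fin n)} {h : Fin n} {rest : List (Fin n)}
    (heq : truncIn m k w = h :: rest) : m ≤ (h : ℕ) ∧ (h : ℕ) < k := by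
  induction w with
  | nil => simp [truncIn] at heq
  | cons a t ih =>
      by_cases hc : m ≤ (a : ℕ) ∧ (a : ℕ) < k
      · simp only [truncIn, if_pos hc, List.cons.injEq] at heq
        rw [← heq.1]; exact hc
      · simp only [truncIn, if_neg hc] at heq
        exact ih heq

theorem truncIn_cons_pos {m k : ℕ} {a : Fin n} (t : List (Fin n))
    (h : m ≤ (a : ℕ) ∧ (a : ℕ) < k) : truncIn m k (a :: t) = a :: t := by
  simp [truncIn, h]

theorem truncIn_cons_neg {m k : ℕ} {a : Fin n} (t : List (Fin n))
    (h : ¬ (m ≤ (a : ℕ) ∧ (a : ℕ) < k)) : truncIn m k (a :: t) = truncIn m k t := by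
  simp [truncIn, h]

/-! ### Layer 3: machine lemmas -/

theorem machineL_append (m : ℕ) (S : Fin n → Bool) (A B : List (Fin n)) :
    machineL m S (A ++ B) = machineL m S A ++ machineL m (evolve m S A) B := by
  induction A generalizing S with
  | nil => rfl
  | cons x A' ih =>
      by_cases h1 : (x : ℕ) < m
      · simp only [List.cons_append, machineL, evolve, if_pos h1, List.append_eq, ih]
      · by_cases h2 : S x
        · simp only [List.cons_append, machineL, evolve, if_neg h1, if_pos h2,
            List.append_eq, ih]
        · simp only [List.cons_append, machineL, evolve, if_neg h1, if_neg h2,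
            List.append_eq, ih, List.cons_append]

theorem machineL_sirrel {m : ℕ} {S S' : Fin n → Bool}
    (h : ∀ y : Fin n, m ≤ (y : ℕ) → S y = S' y) (w : List (Fin n)) :
    machineL m S w = machineL m S' w := by
  induction w generalizing S S' with
  | nil => rfl
  | cons x r ih =>
      by_cases h1 : (x : ℕ) < m
      · simp only [machineL, if_pos h1]; exact ih h
      · have hx : S x = S' x := h x (Nat.le_of_not_lt h1)
        by_cases h2 : S x
        · simp only [machineL, if_neg h1, if_pos h2, if_pos (hx ▸ h2)]
          exact ih h
        · simp only [machineL, if_neg h1, if_neg h2, if_neg (hx ▸ h2)]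
          congr 1
          refine ih (fun y hy => ?_)
          simp only [upd]
          by_cases hyx : y < x
          · rw [if_pos hyx, if_pos hyx]; exact h y hy
          · rw [if_neg hyx, if_neg hyx]

theorem machineL_sublist (m : ℕ) (S : Fin n → Bool) (w : List (Fin n)) :
    (machineL m S w).Sublist w := by
  induction w generalizing S with
  | nil => exact List.nil_sublist _
  | cons x r ih =>
      by_cases h1 : (x : ℕ) < m
      · simp only [machineL, if_pos h1]
        exact (ih S).trans (List.sublist_cons_self x r)
      · by_cases h2 : S x
        · simp only [machineL, if_neg h1, if_pos h2]
          exact (ih S).trans (List.sublist_cons_self x r)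
        · simp only [machineL, if_neg h1, if_neg h2]
          exact List.cons_sublist_cons.2 (ih _)

/-- Monotonicity between two machines: lower threshold and smaller armed set keep more. -/
theorem machineL_mono {τ m : ℕ} (hm : m ≤ τ) {S₁ S₂ : Fin n → Bool}
    (hS : ∀ y : Fin n, τ ≤ (y : ℕ) → S₂ y = true → S₁ y = true) (w : List (Fin n)) :
    (machineL τ S₁ w).Sublist (machineL m S₂ w) := by
  induction w generalizing S₁ S₂ with
  | nil => exact List.nil_sublist _
  | cons x r ih =>
      by_cases h1 : (x : ℕ) < τ
      · -- machine τ skips or x < m for both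
        have lhs : machineL τ S₁ (x :: r) = machineL τ S₁ r := by
          simp only [machineL, if_pos h1]
        rw [lhs]
        by_cases h2 : (x : ℕ) < m
        · simp only [machineL, if_pos h2]; exact ih hS
        · by_cases h3 : S₂ x
          · simp only [machineL, if_neg h2, if_pos h3]; exact ih hS
          · simp only [machineL, if_neg h2, if_neg h3]
            refine ((ih (S₂ := upd S₂ x) ?_).trans (List.sublist_cons_self x _))
            intro y hy hS2
            simp only [upd] at hS2
            by_cases hyx : y < x
            · rw [if_pos hyx] at hS2; exact hS y hy hS2
            · rw [if_neg hyx] at hS2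
              have : y = x := by simpa using hS2
              subst this
              omega
      · -- x ≥ τ ≥ m
        have h2 : ¬ (x : ℕ) < m := by omega
        by_cases h3 : S₁ x
        · -- τ-machine deletes
          have lhs : machineL τ S₁ (x :: r) = machineL τ S₁ r := by
            simp only [machineL, if_neg h1, if_pos h3]
          rw [lhs]
          by_cases h4 : S₂ x
          · simp only [machineL, if_neg h2, if_pos h4]; exact ih hS
          · simp only [machineL, if_neg h2, if_neg h4]
            refine (ih (S₂ := upd S₂ x) ?_).trans (List.sublist_cons_self x _)
            intro y hy hS2
            simp only [upd] at hS2
            by_cases hyx : y < x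
            · rw [if_pos hyx] at hS2; exact hS y hy hS2
            · rw [if_neg hyx] at hS2
              have : y = x := by simpa using hS2
              subst this; exact h3
        · -- τ-machine keeps, hence S₂ x = false too
          have h4 : ¬ S₂ x := by
            intro hc
            exact h3 (hS x (Nat.le_of_not_lt h1) hc)
          simp only [machineL, if_neg h1, if_neg h2, if_neg h3, if_neg h4]
          refine List.cons_sublist_cons.2 (ih ?_)
          intro y hy hS2
          simp only [upd] at hS2 ⊢
          by_cases hyx : y < x
          · rw [if_pos hyx] at hS2; rw [if_pos hyx]; exact hS y hy hS2
          · rw [if_neg hyx] at hS2; rw [if_neg hyx]; exact hS2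

/-! ### Layer 4: more machine lemmas -/

theorem evolve_append (m : ℕ) (S : Fin n → Bool) (A B : List (Fin n)) :
    evolve m S (A ++ B) = evolve m (evolve m S A) B := by
  induction A generalizing S with
  | nil => rfl
  | cons x A' ih =>
      by_cases h1 : (x : ℕ) < m
      · simp only [List.cons_append, evolve, if_pos h1, List.append_eq, ih]
      · by_cases h2 : S x
        · simp only [List.cons_append, evolve, if_neg h1, if_pos h2, List.append_eq, ih]
        · simp only [List.cons_append, evolve, if_neg h1, if_neg h2, List.append_eq, ih]

theorem machineL_junk {τ : ℕ} {junk : List (Fin n)} (hj : ∀ x ∈ junk, (x : ℕ) < τ)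
    (S : Fin n → Bool) (w : List (Fin n)) :
    machineL τ S (junk ++ w) = machineL τ S w := by
  induction junk with
  | nil => rfl
  | cons x j ih =>
      have hx : (x : ℕ) < τ := hj x (by simp)
      simp only [List.cons_append, machineL, if_pos hx]
      exact ih (fun y hy => hj y (by simp [hy]))

theorem machineL_keepAll (w : List (Fin n)) (S : Fin n → Bool)
    (HW : ∀ w₁ (y : Fin n) w₂, w = w₁ ++ y :: w₂ → S y = true → ∃ z ∈ w₁, (z : ℕ) < (y : ℕ))
    (HP : ∀ w₁ (y : Fin n) w₂ w₃, w = w₁ ++ y :: w₂ ++ y :: w₃ → ∃ z ∈ w₂, (z : ℕ) < (y : ℕ)) :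
    machineL 0 S w = w := by
  induction w generalizing S with
  | nil => rfl
  | cons x r ih =>
      have h1 : ¬ (x : ℕ) < 0 := Nat.not_lt_zero _
      have h2 : ¬ S x = true := by
        intro hc
        obtain ⟨z, hz, _⟩ := HW [] x r rfl hc
        simp at hz
      simp only [machineL, if_neg h1, if_neg h2]
      congr 1
      refine ih (upd S x) ?_ ?_
      · intro w₁ y w₂ hsplit hy
        simp only [upd] at hy
        by_cases hyx : y < x
        · rw [if_pos hyx] at hy
          obtain ⟨z, hz, hzy⟩ := HW (x :: w₁) y w₂ (by rw [hsplit]; rfl) hy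
          rcases List.mem_cons.1 hz with hz | hz
          · subst hz
            exfalso
            exact absurd (lt_trans (Fin.lt_def.2 hzy) hyx) (lt_irrefl _)
          · exact ⟨z, hz, hzy⟩
        · rw [if_neg hyx] at hy
          have : y = x := by simpa using hy
          subst this
          obtain ⟨z, hz, hzy⟩ := HP [] y w₁ w₂ (by rw [hsplit]; rfl)
          exact ⟨z, hz, hzy⟩
      · intro w₁ y w₂ w₃ hsplit
        exact HP (x :: w₁) y w₂ w₃ (by rw [hsplit]; rfl)

theorem machineL_suffix_form {τ : ℕ} :
    ∀ (w : List (Fin n)) (S : Fin n → Bool) (α : List (Fin n)) (x : Fin n) (β : List (Fin n)),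
    machineL τ S w = α ++ x :: β →
    ∃ w₁ w₂, w = w₁ ++ x :: w₂ ∧ τ ≤ (x : ℕ) ∧ (evolve τ S w₁) x = false ∧
      β = machineL τ (upd (evolve τ S w₁) x) w₂ := by
  intro w
  induction w with
  | nil =>
      intro S α x β h
      exfalso
      cases α <;> simp [machineL] at h
  | cons y r ih =>
      intro S α x β h
      by_cases h1 : (y : ℕ) < τ
      · rw [machineL, if_pos h1] at h
        obtain ⟨w₁, w₂, hw, hτ, hev, hβ⟩ := ih S α x β h
        refine ⟨y :: w₁, w₂, by rw [List.cons_append, hw], hτ, ?_, ?_⟩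
        · rw [evolve, if_pos h1]; exact hev
        · rw [evolve, if_pos h1]; exact hβ
      · by_cases h2 : S y
        · rw [machineL, if_neg h1, if_pos h2] at h
          obtain ⟨w₁, w₂, hw, hτ, hev, hβ⟩ := ih S α x β h
          refine ⟨y :: w₁, w₂, by rw [List.cons_append, hw], hτ, ?_, ?_⟩
          · rw [evolve, if_neg h1, if_pos h2]; exact hev
          · rw [evolve, if_neg h1, if_pos h2]; exact hβ
        · rw [machineL, if_neg h1, if_neg h2] at h
          cases α with
          | nil =>
              simp only [List.nil_append, List.cons.injEq] at h
              obtain ⟨hyx, hβ⟩ := h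
              subst hyx
              exact ⟨[], r, rfl, Nat.le_of_not_lt h1, by simpa [evolve] using h2, by simpa [evolve] using hβ.symm⟩
          | cons a α' =>
              simp only [List.cons_append, List.cons.injEq] at h
              obtain ⟨hya, hrest⟩ := h
              obtain ⟨w₁, w₂, hw, hτ, hev, hβ⟩ := ih (upd S y) α' x β hrest
              refine ⟨y :: w₁, w₂, by rw [List.cons_append, hw], hτ, ?_, ?_⟩
              · rw [evolve, if_neg h1, if_neg h2]; exact hev
              · rw [evolve, if_neg h1, if_neg h2]; exact hβ

theorem machineL_runeq {m : ℕ} {b : Fin n} (hmb : m ≤ (b : ℕ)) :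
    ∀ (w : List (Fin n)) (Sm Sτ : Fin n → Bool),
    (∀ x ∈ w, (x : ℕ) < m ∨ (b : ℕ) ≤ (x : ℕ)) →
    Sm b = true →
    (∀ y : Fin n, (b : ℕ) < (y : ℕ) → Sm y = Sτ y) →
    (∀ y : Fin n, m ≤ (y : ℕ) → (y : ℕ) < (b : ℕ) → Sm y = false) →
    machineL m Sm w = machineL ((b : ℕ) + 1) Sτ w
    ∧ (evolve m Sm w) b = true
    ∧ (∀ y : Fin n, (b : ℕ) < (y : ℕ) → (evolve m Sm w) y = (evolve ((b : ℕ) + 1) Sτ w) y)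
    ∧ (∀ y : Fin n, m ≤ (y : ℕ) → (y : ℕ) < (b : ℕ) → (evolve m Sm w) y = false) := by
  intro w
  induction w with
  | nil => intro Sm Sτ _ h1 h2 h3; exact ⟨rfl, h1, h2, h3⟩
  | cons x r ih =>
      intro Sm Sτ hmem hSb hagree hlow
      have hmem' : ∀ y ∈ r, (y : ℕ) < m ∨ (b : ℕ) ≤ (y : ℕ) :=
        fun y hy => hmem y (by simp [hy])
      rcases hmem x (by simp) with hx | hx
      · -- x < m : both skip
        have hx2 : (x : ℕ) < (b : ℕ) + 1 := by omega
        simp only [machineL, evolve, if_pos hx, if_pos hx2]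
        exact ih Sm Sτ hmem' hSb hagree hlow
      · rcases Nat.lt_or_ge (b : ℕ) (x : ℕ) with hbx | hxb
        · -- x > b : aligned behaviour
          have hx1 : ¬ (x : ℕ) < m := by omega
          have hx2 : ¬ (x : ℕ) < (b : ℕ) + 1 := by omega
          have hSx : Sm x = Sτ x := hagree x hbx
          by_cases hdel : Sm x
          · simp only [machineL, evolve, if_neg hx1, if_neg hx2, if_pos hdel,
              if_pos (hSx ▸ hdel)]
            exact ih Sm Sτ hmem' hSb hagree hlow
          · have hdel' : ¬ Sτ x = true := fun hc => hdel (hSx ▸ hc)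
            simp only [machineL, evolve, if_neg hx1, if_neg hx2, if_neg hdel, if_neg hdel']
            have hbxf : b < x := by rw [Fin.lt_def]; exact hbx
            have inv1 : upd Sm x b = true := by
              simp only [upd, if_pos hbxf]; exact hSb
            have inv2 : ∀ y : Fin n, (b : ℕ) < (y : ℕ) → upd Sm x y = upd Sτ x y := by
              intro y hy
              simp only [upd]
              by_cases hyx : y < x
              · rw [if_pos hyx, if_pos hyx]; exact hagree y hy
              · rw [if_neg hyx, if_neg hyx]
            have inv3 : ∀ y : Fin n, m ≤ (y : ℕ) → (y : ℕ) < (b : ℕ) → upd Sm x y = false := by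
              intro y hy1 hy2
              have hyx : y < x := by rw [Fin.lt_def]; omega
              simp only [upd, if_pos hyx]
              exact hlow y hy1 hy2
            obtain ⟨e1, e2, e3, e4⟩ := ih (upd Sm x) (upd Sτ x) hmem' inv1 inv2 inv3
            exact ⟨by rw [e1], e2, e3, e4⟩
        · -- x = b (as naturals, hence as Fin)
          have hxb' : (x : ℕ) = (b : ℕ) := by omega
          have hxbf : x = b := Fin.ext hxb'
          subst hxbf
          have hx1 : ¬ (x : ℕ) < m := by omega
          have hx2 : (x : ℕ) < (x : ℕ) + 1 := by omega
          simp only [machineL, evolve, if_neg hx1, if_pos hSb, if_pos hx2]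
          exact ih Sm Sτ hmem' hSb hagree hlow

theorem machineL_fresh {m : ℕ} {b : Fin n} {T : Fin n → Bool} {h : Fin n} {rest : List (Fin n)}
    (hh : m ≤ (h : ℕ) ∧ (h : ℕ) < (b : ℕ))
    (hlow : ∀ y : Fin n, m ≤ (y : ℕ) → (y : ℕ) < (b : ℕ) → T y = false) :
    machineL m T (h :: rest) = machineL m (fun _ => false) (h :: rest) := by
  have h1 : ¬ (h : ℕ) < m := by omega
  have h2 : ¬ T h = true := by rw [hlow h hh.1 hh.2]; simp
  simp only [machineL, if_neg h1, if_pos (show ¬ T h = true from h2), if_neg h2,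
    Bool.false_eq_true, if_neg (Bool.false_ne_true)]
  congr 1
  refine machineL_sirrel ?_ rest
  intro y hy
  simp only [upd]
  by_cases hyh : y < h
  · rw [if_pos hyh, if_pos hyh]
    exact hlow y hy (by rw [Fin.lt_def] at hyh; omega)
  · rw [if_neg hyh, if_neg hyh]

/-! ### Layer 5: the key non-embedding lemma (EL) -/

/-- Every occurrence of `x` in `u` is preceded by a strictly larger letter. -/
def HypA (x : Fin n) (u : List (Fin n)) : Prop :=
  ∀ w₁ w₂, u = w₁ ++ x :: w₂ → ∃ y ∈ w₁, (x : ℕ) < (y : ℕ)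

/-- Between any two equal letters there is a strictly larger letter. -/
def HypB (w : List (Fin n)) : Prop :=
  ∀ (z : Fin n) w₁ w₂ w₃, w = w₁ ++ z :: w₂ ++ z :: w₃ → ∃ y ∈ w₂, (z : ℕ) < (y : ℕ)

theorem cons_sublist_of_ne {a b : Fin n} {l r : List (Fin n)}
    (h : (a :: l).Sublist (b :: r)) (hne : a ≠ b) : (a :: l).Sublist r := by
  cases h with
  | cons _ h => exact h
  | cons_cons _ => exact absurd rfl hne

theorem HypB_tail {c : Fin n} {u : List (Fin n)} (h : HypB (c :: u)) : HypB u := by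
  intro z w₁ w₂ w₃ hsplit
  exact h z (c :: w₁) w₂ w₃ (by rw [hsplit]; rfl)

theorem HypA_shift {x b : Fin n} {u₀ : List (Fin n)} (hble : (b : ℕ) ≤ (x : ℕ))
    (hA : HypA x (b :: u₀)) : HypA x u₀ := by
  intro w₁ w₂ hsplit
  obtain ⟨y, hy, hxy⟩ := hA (b :: w₁) w₂ (by rw [hsplit]; rfl)
  rcases List.mem_cons.1 hy with hy | hy
  · subst hy; omega
  · exact ⟨y, hy, hxy⟩

theorem HypB_shift {x b : Fin n} {u₀ : List (Fin n)} (hble : (b : ℕ) ≤ (x : ℕ))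
    (hB : HypB (x :: b :: u₀)) : HypB (x :: u₀) := by
  intro z w₁ w₂ w₃ hsplit
  cases w₁ with
  | nil =>
      simp only [List.nil_append, List.cons_append, List.cons.injEq] at hsplit
      obtain ⟨hzx, hu₀⟩ := hsplit
      subst hzx
      obtain ⟨y, hy, hzy⟩ := hB x [] (b :: w₂) w₃ (by rw [hu₀]; rfl)
      rcases List.mem_cons.1 hy with hy | hy
      · subst hy; omega
      · exact ⟨y, hy, hzy⟩
  | cons c w₁' =>
      simp only [List.cons_append, List.cons.injEq] at hsplit
      obtain ⟨hcx, hu₀⟩ := hsplit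
      exact hB z (x :: b :: w₁') w₂ w₃ (by rw [hu₀]; rfl)

theorem EL : ∀ (u : List (Fin n)) (τ : ℕ) (x : Fin n) (S : Fin n → Bool),
    τ ≤ (x : ℕ) + 1 → HypA x u → HypB (x :: u) →
    ¬ ((x :: machineL τ (upd S x) u).Sublist u) := by
  intro u
  induction u with
  | nil => intro τ x S _ _ _ h; simp at h
  | cons b u₀ ih =>
      intro τ x S hτ hA hB hsub
      by_cases hbx : b = x
      · subst hbx
        obtain ⟨y, hy, -⟩ := hA [] u₀ rfl
        simp at hy
      by_cases hb1 : (b : ℕ) < τ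
      · rw [machineL, if_pos hb1] at hsub
        have hble : (b : ℕ) ≤ (x : ℕ) := by omega
        exact ih τ x S hτ (HypA_shift hble hA) (HypB_shift hble hB)
          (cons_sublist_of_ne hsub (fun hc => hbx hc.symm))
      · by_cases hb2 : upd S x b
        · rw [machineL, if_neg hb1, if_pos hb2] at hsub
          have hble : (b : ℕ) ≤ (x : ℕ) := by
            simp only [upd] at hb2
            by_cases hbfx : b < x
            · rw [Fin.lt_def] at hbfx; omega
            · rw [if_neg hbfx] at hb2
              exact absurd (by simpa using hb2) hbx
          exact ih τ x S hτ (HypA_shift hble hA) (HypB_shift hble hB)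
            (cons_sublist_of_ne hsub (fun hc => hbx hc.symm))
        · rw [machineL, if_neg hb1, if_neg hb2] at hsub
          have hsub' := cons_sublist_of_ne hsub (fun hc => hbx hc.symm)
          have hsub'' : ((b :: machineL τ (upd (upd S x) b) u₀)).Sublist u₀ :=
            (List.sublist_cons_self x _).trans hsub'
          refine ih τ b (upd S x) (by omega) ?_ (HypB_tail hB) hsub''
          intro w₁ w₂ hsplit
          exact hB b [x] w₁ w₂ (by rw [hsplit]; rfl)

/-! ### Layer 6: canonicity extraction -/

theorem Canonical.suffix {c v : List (Fin n)} (hc : Canonical c) (hv : v.IsSuffix c) :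
    Canonical v := by
  intro i u hinf
  exact hc i u (hinf.trans hv.isInfix)

theorem Canonical.tail {a : Fin n} {t : List (Fin n)} (hc : Canonical (a :: t)) :
    Canonical t :=
  hc.suffix ⟨[a], rfl⟩

theorem Canonical.hypB {c : List (Fin n)} (hc : Canonical c) : HypB c := by
  intro z w₁ w₂ w₃ hsplit
  have hinf : ([z] ++ w₂ ++ [z]).IsInfix c := by
    refine ⟨w₁, w₃, ?_⟩
    rw [hsplit]
    simp
  obtain ⟨⟨j, hj, hzj⟩, -⟩ := hc z w₂ hinf
  exact ⟨j, hj, Fin.lt_def.1 hzj⟩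

theorem Canonical.hypA {c : List (Fin n)} (hc : Canonical c) {w₁ : List (Fin n)} {x : Fin n}
    {w₂ : List (Fin n)} (hsplit : c = w₁ ++ x :: w₂) : HypA x w₂ := by
  intro α β hsplit2
  have hinf : ([x] ++ α ++ [x]).IsInfix c := by
    refine ⟨w₁, β, ?_⟩
    rw [hsplit, hsplit2]
    simp
  obtain ⟨⟨j, hj, hxj⟩, -⟩ := hc x α hinf
  exact ⟨j, hj, Fin.lt_def.1 hxj⟩

/-! ### Layer 7: the main combinatorial theorem KS -/

theorem KS : ∀ (c : List (Fin n)), Canonical c → ∀ m k : ℕ,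
    g m k c = machineL m (fun _ => false) (truncIn m k c) := by
  intro c
  induction c with
  | nil => intro _ m k; rfl
  | cons b u₀ ih =>
      intro hc m k
      have hu₀ : Canonical u₀ := hc.tail
      by_cases hcond : m ≤ (b : ℕ) ∧ (b : ℕ) < k
      · -- the main case
        set τ : ℕ := (b : ℕ) + 1 with hτdef
        set F0 : Fin n → Bool := (fun _ => false) with hF0
        have hX₁ : g τ n u₀ = machineL τ F0 u₀ := by
          rw [ih hu₀ τ n]
          obtain ⟨R', hR', hmem'⟩ := truncIn_decomp τ n u₀
          have hjunk : ∀ x ∈ R', (x : ℕ) < τ := by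
            intro x hx
            have := hmem' x hx
            have hxn : (x : ℕ) < n := x.isLt
            omega
          conv_rhs => rw [hR']
          rw [machineL_junk hjunk]
        obtain ⟨R, hR, hmem⟩ := truncIn_decomp m (b : ℕ) u₀
        set V : List (Fin n) := truncIn m (b : ℕ) u₀ with hVdef
        set Y₁ : List (Fin n) := machineL m F0 V with hY₁def
        have hY₁ : g m (b : ℕ) u₀ = Y₁ := ih hu₀ m (b : ℕ)
        set A : List (Fin n) := machineL τ F0 R with hAdef
        set SR : Fin n → Bool := evolve τ F0 R with hSRdef
        set B : List (Fin n) := machineL τ SR V with hBdef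
        have split1 : machineL τ F0 u₀ = A ++ B := by
          rw [hR, machineL_append]
        have hBY : B.Sublist Y₁ := by
          refine machineL_mono (by omega) ?_ V
          intro y _ hy
          simp [hF0] at hy
        have hYV : Y₁.Sublist V := machineL_sublist m F0 V
        have hVu₀ : V.IsSuffix u₀ := truncIn_suffix m (b : ℕ) u₀
        have hY₁u₀ : Y₁.Sublist u₀ := hYV.trans hVu₀.sublist
        -- the join evaluation
        have hjoin : join (b :: machineL τ F0 u₀) Y₁ = (b :: A) ++ Y₁ := by
          have hrw : b :: machineL τ F0 u₀ = (b :: A) ++ B := by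
            rw [split1]; rfl
          rw [hrw]
          refine join_append_eq ?_ hBY
          intro α₁ x α₂ hsplit
          cases α₁ with
          | nil =>
              simp only [List.nil_append, List.cons.injEq] at hsplit
              obtain ⟨hbx, hAx⟩ := hsplit
              subst hbx
              intro hcon
              rw [← hAx, ← split1] at hcon
              have hcon' : (b :: machineL τ F0 u₀).Sublist u₀ := hcon.trans hY₁u₀
              have hre : machineL τ F0 u₀ = machineL τ (upd F0 b) u₀ := by
                refine machineL_sirrel ?_ u₀
                intro y hy
                simp only [hF0, upd]
                by_cases hyb : y < b
                · rw [if_pos hyb]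
                · rw [if_neg hyb]
                  have hne : ¬ y = b := by
                    intro he; subst he
                    rw [Fin.lt_def] at hyb
                    omega
                  simp [hne]
              rw [hre] at hcon'
              exact EL u₀ τ b F0 (by omega) (hc.hypA (w₁ := []) rfl) hc.hypB hcon'
          | cons hd α₁' =>
              simp only [List.cons_append, List.cons.injEq] at hsplit
              obtain ⟨hbhd, hA2⟩ := hsplit
              intro hcon
              obtain ⟨w₁, w₂', hw, hτx, hev, hβ⟩ :=
                machineL_suffix_form R F0 α₁' x α₂ (hAdef.symm.trans hA2)
              set Sstar : Fin n → Bool := evolve τ F0 w₁ with hSstar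
              have hSRco : SR = evolve τ (upd Sstar x) w₂' := by
                rw [hSRdef, hw, evolve_append, ← hSstar]
                rw [evolve, if_neg (by omega)]
                simp only [hev, Bool.false_eq_true, if_false]
              have hαB : α₂ ++ B = machineL τ (upd Sstar x) (w₂' ++ V) := by
                rw [hβ, machineL_append, ← hSRco, ← hBdef]
              have hu₀split : u₀ = w₁ ++ x :: (w₂' ++ V) := by
                rw [hR, hw]; simp
              have hsuf : (x :: (w₂' ++ V)).IsSuffix (b :: u₀) := by
                refine ⟨b :: w₁, ?_⟩
                rw [hu₀split]; rfl
              have hYsub : Y₁.Sublist (w₂' ++ V) :=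
                hYV.trans (List.sublist_append_right w₂' V)
              rw [hαB] at hcon
              exact EL (w₂' ++ V) τ x Sstar (by omega)
                (hc.hypA (w₁ := b :: w₁) (by rw [hu₀split]; rfl))
                ((hc.suffix hsuf).hypB)
                (hcon.trans hYsub)
        -- now the machine side
        obtain ⟨e1, e2, e3, e4⟩ := machineL_runeq (b := b) hcond.1 R (upd F0 b) F0
          (by intro x hx; have := hmem x hx; omega)
          (by simp only [upd, if_neg (lt_irrefl b)]; simp)
          (by intro y hy
              simp only [upd, hF0]
              have h1 : ¬ y < b := by rw [Fin.lt_def]; omega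
              have h2 : ¬ y = b := by intro he; subst he; omega
              simp [h1, h2])
          (by intro y hy1 hy2
              have h1 : y < b := by rw [Fin.lt_def]; omega
              simp only [upd, if_pos h1, hF0])
        set Sg : Fin n → Bool := evolve m (upd F0 b) R with hSg
        have hfresh : machineL m Sg V = Y₁ := by
          rw [hY₁def]
          cases hV : V with
          | nil => rfl
          | cons h rest =>
              have hh := truncIn_head (hVdef ▸ hV)
              exact machineL_fresh hh e4
        have hmachine : machineL m F0 (truncIn m k (b :: u₀)) = (b :: A) ++ Y₁ := by
          rw [truncIn_cons_pos u₀ hcond]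
          rw [machineL, if_neg (by omega), if_neg (by simp [hF0])]
          rw [hR, machineL_append, e1, ← hAdef, ← hSg, hfresh]
          rfl
        rw [hmachine]
        show g m k (b :: u₀) = (b :: A) ++ Y₁
        rw [g, if_pos hcond, hX₁, hY₁, hjoin]
      · -- boring case
        rw [truncIn_cons_neg _ hcond, ← ih hu₀ m k]
        show g m k (b :: u₀) = g m k u₀
        rw [g, if_neg hcond]

/-! ### Layer 8: main combinatorial corollary -/

theorem truncLtN_suffix (k : ℕ) (w : List (Fin n)) : (truncLtN k w).IsSuffix w := by
  induction w with
  | nil => exact List.suffix_refl _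
  | cons a t ih =>
      by_cases h : (a : ℕ) < k
      · simp [truncLtN, h]
      · simp only [truncLtN, if_neg h]
        exact ih.trans (List.suffix_cons a t)

theorem main_comb (c : List (Fin n)) (hc : Canonical c) (k : ℕ) :
    g 0 k c = truncLtN k c := by
  rw [KS c hc 0 k, truncIn_zero]
  refine machineL_keepAll _ _ ?_ ?_
  · intro w₁ y w₂ _ hy
    simp at hy
  · intro w₁ y w₂ w₃ hsplit
    have h1 : ([y] ++ w₂ ++ [y]).IsInfix (truncLtN k c) :=
      ⟨w₁, w₃, by rw [hsplit]; simp⟩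
    have hinf : ([y] ++ w₂ ++ [y]).IsInfix c := h1.trans (truncLtN_suffix k c).isInfix
    obtain ⟨-, ⟨j, hj, hjy⟩⟩ := hc y w₂ hinf
    exact ⟨j, hj, Fin.lt_def.1 hjy⟩

/-! ### Layer 9: the evolution layer -/

/-- The new value assigned to coordinate `i` by `Fstep i`. -/
def newval (i : Fin n) (s : Fin n → List (Fin n)) : List (Fin n) :=
  i :: List.foldr join []
      ((((List.finRange n).filter (fun j => decide (i < j))).reverse).map s)

theorem Fstep_eq (i : Fin n) (s : Fin n → List (Fin n)) :
    Fstep i s = Function.update s i (newval i s) := rfl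

theorem Fstep_apply_ne {i j : Fin n} (hij : j ≠ i) (s : Fin n → List (Fin n)) :
    Fstep i s j = s j := Function.update_of_ne hij _ s

theorem Fstep_apply_self (i : Fin n) (s : Fin n → List (Fin n)) :
    Fstep i s i = newval i s := Function.update_self i _ s

theorem newval_congr {i : Fin n} {s s' : Fin n → List (Fin n)}
    (h : ∀ j, i < j → s j = s' j) : newval i s = newval i s' := by
  unfold newval
  congr 1
  refine congrArg _ (List.map_congr_left ?_)
  intro j hj
  rw [List.mem_reverse, List.mem_filter] at hj
  exact h j (by simpa using hj.2)

theorem Fstep_update_self (i : Fin n) (v : List (Fin n)) (s : Fin n → List (Fin n)) :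
    Fstep i (Function.update s i v) = Fstep i s := by
  funext l
  by_cases hl : l = i
  · subst hl
    rw [Fstep_apply_self, Fstep_apply_self]
    refine newval_congr ?_
    intro j hj
    exact Function.update_of_ne (fun hc => by subst hc; exact lt_irrefl _ hj) _ _
  · rw [Fstep_apply_ne hl, Fstep_apply_ne hl, Function.update_of_ne hl]

theorem Fstep_idem (i : Fin n) (s : Fin n → List (Fin n)) :
    Fstep i (Fstep i s) = Fstep i s := by
  rw [Fstep_eq i s, Fstep_update_self, Fstep_eq]

theorem Fstep_comm_update {i j : Fin n} (hij : i < j) (s : Fin n → List (Fin n)) :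
    Fstep j (Fstep i s) = Function.update (Fstep j s) i (Fstep i s i) := by
  funext l
  by_cases hl : l = j
  · subst hl
    have hji : l ≠ i := fun hc => by subst hc; exact lt_irrefl _ hij
    rw [Fstep_apply_self, Function.update_of_ne hji, Fstep_apply_self]
    refine newval_congr ?_
    intro j' hj'
    refine Fstep_apply_ne (fun hc => ?_) s
    subst hc
    exact lt_irrefl _ (hij.trans hj')
  · by_cases hl2 : l = i
    · subst hl2
      rw [Fstep_apply_ne hl, Function.update_self]
    · rw [Fstep_apply_ne hl, Fstep_apply_ne hl2, Function.update_of_ne hl2,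
        Fstep_apply_ne hl]

theorem Fstep_braid1 {i j : Fin n} (hij : i < j) (s : Fin n → List (Fin n)) :
    Fstep i (Fstep j (Fstep i s)) = Fstep i (Fstep j s) := by
  rw [Fstep_comm_update hij, Fstep_update_self]

theorem Fstep_braid2 {i j : Fin n} (hij : i < j) (s : Fin n → List (Fin n)) :
    Fstep j (Fstep i (Fstep j s)) = Fstep i (Fstep j s) := by
  funext l
  by_cases hl : l = j
  · subst hl
    have hji : l ≠ i := fun hc => by subst hc; exact lt_irrefl _ hij
    rw [Fstep_apply_self, Fstep_apply_ne hji, Fstep_apply_self]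
    refine newval_congr ?_
    intro j' hj'
    have h1 : j' ≠ l := fun hc => by subst hc; exact lt_irrefl _ hj'
    have h2 : j' ≠ i := fun hc => by subst hc; exact lt_irrefl _ (hij.trans hj')
    rw [Fstep_apply_ne h2, Fstep_apply_ne h1]
  · rw [Fstep_apply_ne hl]

theorem Fword_append (u v : List (Fin n)) (s : Fin n → List (Fin n)) :
    Fword (u ++ v) s = Fword u (Fword v s) := List.foldr_append ..

theorem Fword_kisStep {u v : List (Fin n)} (h : KisStep u v) (s : Fin n → List (Fin n)) :
    Fword u s = Fword v s := by
  cases h with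
  | idem u' v' i =>
      rw [Fword_append, Fword_append, Fword_append, Fword_append]
      exact congrArg (Fword u') (Fstep_idem i (Fword v' s))
  | left u' v' i j hij =>
      rw [Fword_append, Fword_append, Fword_append, Fword_append]
      exact congrArg (Fword u') (Fstep_braid1 hij (Fword v' s))
  | right u' v' i j hij =>
      rw [Fword_append, Fword_append, Fword_append, Fword_append]
      exact congrArg (Fword u') (Fstep_braid2 hij (Fword v' s))

theorem Fword_invariant {u v : List (Fin n)} (h : KisEquiv u v) (s : Fin n → List (Fin n)) :
    Fword u s = Fword v s := by
  induction h with
  | rel _ _ hr => exact Fword_kisStep hr s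
  | refl _ => rfl
  | symm _ _ _ ih => exact ih.symm
  | trans _ _ _ _ _ ih1 ih2 => exact ih1.trans ih2

/-! ### Layer 10: the fold over states equals `g` -/

theorem filter_split {l : List (Fin n)}
    (hl : l.Pairwise (fun x y : Fin n => (x : ℕ) < (y : ℕ))) (m a k : ℕ)
    (hma : m ≤ a) (hak : a ≤ k) :
    l.filter (fun j : Fin n => decide (m ≤ (j : ℕ) ∧ (j : ℕ) < k)) =
      l.filter (fun j : Fin n => decide (m ≤ (j : ℕ) ∧ (j : ℕ) < a)) ++
      l.filter (fun j : Fin n => decide (a ≤ (j : ℕ) ∧ (j : ℕ) < k)) := by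
  induction l with
  | nil => rfl
  | cons x l' ih =>
      have hx := List.pairwise_cons.1 hl
      have ih' := ih hx.2
      by_cases h1 : m ≤ (x : ℕ) ∧ (x : ℕ) < a
      · have h2 : m ≤ (x : ℕ) ∧ (x : ℕ) < k := ⟨h1.1, by omega⟩
        have h3 : ¬ (a ≤ (x : ℕ) ∧ (x : ℕ) < k) := by omega
        simp only [List.filter_cons, decide_eq_true_eq, if_pos h1, if_pos h2, if_neg h3]
        rw [ih']
        rfl
      · by_cases h2 : a ≤ (x : ℕ) ∧ (x : ℕ) < k
        · have h3 : m ≤ (x : ℕ) ∧ (x : ℕ) < k := ⟨by omega, h2.2⟩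
          have hnil : l'.filter (fun j : Fin n => decide (m ≤ (j : ℕ) ∧ (j : ℕ) < a)) = [] := by
            refine List.filter_eq_nil_iff.2 ?_
            intro y hy
            have := hx.1 y hy
            simp only [decide_eq_true_eq]
            omega
          have hcng : l'.filter (fun j : Fin n => decide (m ≤ (j : ℕ) ∧ (j : ℕ) < k)) =
              l'.filter (fun j : Fin n => decide (a ≤ (j : ℕ) ∧ (j : ℕ) < k)) := by
            refine List.filter_congr ?_
            intro y hy
            have := hx.1 y hy
            simp only [decide_eq_decide]
            omega
          simp only [List.filter_cons, decide_eq_true_eq, if_pos h3, if_pos h2, if_neg h1]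
          rw [hnil, hcng]
          rfl
        · have h3 : ¬ (m ≤ (x : ℕ) ∧ (x : ℕ) < k) := by omega
          simp only [List.filter_cons, decide_eq_true_eq, if_neg h1, if_neg h2, if_neg h3]
          exact ih'

theorem filter_point_aux {l : List (Fin n)}
    (hl : l.Pairwise (fun x y : Fin n => (x : ℕ) < (y : ℕ))) (a : Fin n) (ha : a ∈ l) :
    l.filter (fun j : Fin n => decide ((a : ℕ) ≤ (j : ℕ) ∧ (j : ℕ) < (a : ℕ) + 1)) = [a] := by
  induction l with
  | nil => simp at ha
  | cons x l' ih =>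
      have hx := List.pairwise_cons.1 hl
      rcases List.mem_cons.1 ha with hxa | hxa
      · subst hxa
        have h1 : (a : ℕ) ≤ (a : ℕ) ∧ (a : ℕ) < (a : ℕ) + 1 := by omega
        have hnil : l'.filter (fun j : Fin n => decide ((a : ℕ) ≤ (j : ℕ) ∧ (j : ℕ) < (a : ℕ) + 1)) = [] := by
          refine List.filter_eq_nil_iff.2 ?_
          intro y hy
          have := hx.1 y hy
          simp only [decide_eq_true_eq]
          omega
        simp only [List.filter_cons, decide_eq_true_eq, if_pos h1, hnil]
      · have hxlta : (x : ℕ) < (a : ℕ) := hx.1 a hxa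
        have h1 : ¬ ((a : ℕ) ≤ (x : ℕ) ∧ (x : ℕ) < (a : ℕ) + 1) := by omega
        simp only [List.filter_cons, decide_eq_true_eq, if_neg h1]
        exact ih hx.2 hxa

theorem pairwise_finRange : (List.finRange n).Pairwise (fun x y : Fin n => (x : ℕ) < (y : ℕ)) := by
  have := List.pairwise_lt_finRange n
  exact this.imp (fun h => Fin.lt_def.1 h)

/-- Fold of `join` over the states with coordinates in `[m, k)`, in decreasing order. -/
def Rfold (m k : ℕ) (s : Fin n → List (Fin n)) : List (Fin n) :=
  List.foldr join []
    ((((List.finRange n).filter (fun j : Fin n => decide (m ≤ (j : ℕ) ∧ (j : ℕ) < k))).reverse).map s)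

theorem Rfold_congr {m k : ℕ} {s s' : Fin n → List (Fin n)}
    (h : ∀ j : Fin n, m ≤ (j : ℕ) → (j : ℕ) < k → s j = s' j) : Rfold m k s = Rfold m k s' := by
  unfold Rfold
  congr 1
  refine List.map_congr_left ?_
  intro j hj
  rw [List.mem_reverse, List.mem_filter, decide_eq_true_eq] at hj
  exact h j hj.2.1 hj.2.2

theorem newval_eq_Rfold (i : Fin n) (s : Fin n → List (Fin n)) :
    newval i s = i :: Rfold ((i : ℕ) + 1) n s := by
  unfold newval Rfold
  have hfc : (List.finRange n).filter (fun j => decide (i < j)) =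
      (List.finRange n).filter (fun j : Fin n => decide ((i : ℕ) + 1 ≤ (j : ℕ) ∧ (j : ℕ) < n)) := by
    refine List.filter_congr ?_
    intro j _
    simp only [decide_eq_decide, Fin.lt_def]
    have := j.isLt
    omega
  rw [hfc]

theorem Rfold_Fword : ∀ (w : List (Fin n)) (m k : ℕ),
    Rfold m k (Fword w starState) = g m k w := by
  intro w
  induction w with
  | nil =>
      intro m k
      show Rfold m k starState = []
      refine foldr_collapse ?_
      intro x hx
      rw [List.mem_map] at hx
      obtain ⟨j, -, hj⟩ := hx
      rw [← hj]
      exact List.Sublist.refl _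
  | cons a t ih =>
      intro m k
      have hstep : Fword (a :: t) starState = Fstep a (Fword t starState) := rfl
      set σ : Fin n → List (Fin n) := Fword t starState with hσ
      rw [hstep]
      by_cases hcond : m ≤ (a : ℕ) ∧ (a : ℕ) < k
      · -- split the interval at a
        have hsplit1 := filter_split (l := List.finRange n) pairwise_finRange m (a : ℕ) k
          hcond.1 (le_of_lt hcond.2)
        have hsplit2 := filter_split (l := List.finRange n) pairwise_finRange (a : ℕ)
          ((a : ℕ) + 1) k (by omega) (by omega)
        have hpt := filter_point_aux pairwise_finRange a (List.mem_finRange a)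
        rw [g, if_pos hcond]
        unfold Rfold
        rw [hsplit1, hsplit2, hpt]
        rw [List.reverse_append, List.reverse_append, List.map_append, List.map_append,
          List.foldr_append, List.foldr_append]
        -- innermost fold : the lower part
        have hlow : List.foldr join []
            ((((List.finRange n).filter
              (fun j : Fin n => decide (m ≤ (j : ℕ) ∧ (j : ℕ) < (a : ℕ)))).reverse).map (Fstep a σ))
            = g m (a : ℕ) t := by
          rw [← ih m (a : ℕ)]
          unfold Rfold
          congr 1
          refine List.map_congr_left ?_
          intro j hj
          rw [List.mem_reverse, List.mem_filter, decide_eq_true_eq] at hj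
          refine Fstep_apply_ne (fun hc => ?_) σ
          subst hc
          omega
        -- the singleton part
        have hmid : List.map (Fstep a σ) [a].reverse = [a :: g ((a : ℕ) + 1) n t] := by
          simp only [List.reverse_singleton, List.map_cons, List.map_nil]
          rw [Fstep_apply_self, newval_eq_Rfold, ih ((a : ℕ) + 1) n]
        rw [hmid] at *
        simp only [List.foldr_cons] at *
        rw [hlow]
        -- collapse the upper part
        refine foldr_collapse ?_
        intro x hx
        rw [List.mem_map] at hx
        obtain ⟨j, hj, hjx⟩ := hx
        rw [List.mem_reverse, List.mem_filter, decide_eq_true_eq] at hj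
        have hja : j ≠ a := fun hc => by subst hc; omega
        have hxval : x = σ j := by rw [← hjx]; exact Fstep_apply_ne hja σ
        have hmem2 : σ j ∈ (((List.finRange n).filter
            (fun j' : Fin n => decide ((a : ℕ) + 1 ≤ (j' : ℕ) ∧ (j' : ℕ) < n))).reverse).map σ := by
          refine List.mem_map.2 ⟨j, ?_, rfl⟩
          rw [List.mem_reverse, List.mem_filter, decide_eq_true_eq]
          exact ⟨List.mem_finRange j, hj.2.1, j.isLt⟩
        have hsub : (σ j).Sublist (g ((a : ℕ) + 1) n t) := by
          rw [← ih ((a : ℕ) + 1) n]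
          exact mem_sublist_foldr hmem2
        rw [hxval]
        refine hsub.trans ?_
        refine (List.sublist_cons_self a _).trans ?_
        exact sublist_join_left _ _
      · rw [g, if_neg hcond, ← ih m k]
        refine Rfold_congr ?_
        intro j hj1 hj2
        refine Fstep_apply_ne (fun hc => ?_) σ
        subst hc
        exact hcond ⟨hj1, hj2⟩


/-- With `q m = (F_w ⋆) m`, for every `1 ≤ k ≤ n` the nested join
`join q_{k-1} (join q_{k-2} (⋯ (join q_1 q_0)⋯))` equals `T_{{1,…,k}} Can w`, the longest
suffix of `Can w` whose head is `< k` (or `[]`). -/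
theorem stmt_17 {n : ℕ} (hn : 1 ≤ n) (w c : List (Fin n))
    (hc : Canonical c) (hcw : KisEquiv c w)
    (k : ℕ) (hk1 : 1 ≤ k) (hkn : k ≤ n) :
    List.foldr join []
        ((((List.finRange n).filter (fun m : Fin n => decide ((m : ℕ) < k))).reverse).map
          (Fword w starState))
      = truncLtN k c := by
  have hinv : Fword w starState = Fword c starState :=
    (Fword_invariant hcw starState).symm
  rw [hinv]
  have hfc : (List.finRange n).filter (fun m : Fin n => decide ((m : ℕ) < k)) =
      (List.finRange n).filter (fun j : Fin n => decide (0 ≤ (j : ℕ) ∧ (j : ℕ) < k)) := by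
    refine List.filter_congr ?_
    intro j _
    simp only [decide_eq_decide]
    omega
  rw [hfc]
  show Rfold 0 k (Fword c starState) = truncLtN k c
  rw [Rfold_Fword c 0 k, main_comb c hc k]
end
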